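/- arXiv:1608.06885 — 5 statements merged into one kernel-verified Lean document; each statement's English description precedes it below -/
import Mathlib

section
/- Let Q be an even integral lattice and let ε₁, ε₂ : Q × Q → {±1} be two bimultiplicative maps each satisfying εᵢ(α,α) = (−1)^{(α|α)/2} for all α ∈ Q. Then there exists a function η : Q → {±1} such that ε₁(α,β) = η(α)·η(β)·η(α+β)·ε₂(α,β) for all α, β ∈ Q (i.e., any two such 2-cocycles are equivalent). -/
/-- Any two bimultiplicative 2-cocycles `ε₁, ε₂ : Q × Q → {±1}` on an even
integral lattice `Q` satisfying `εᵢ(α,α) = (-1)^(|α|²/2)` are equivalent: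
there is `η : Q → {±1}` with `ε₁(α,β) = η(α)η(β)η(α+β)ε₂(α,β)`. -/
theorem stmt_1 (Q : Type*) [AddCommGroup Q] [Module.Free ℤ Q] [Module.Finite ℤ Q]
    (B : Q → Q → ℤ)
    (haddl : ∀ α α' β : Q, B (α + α') β = B α β + B α' β)
    (haddr : ∀ α β β' : Q, B α (β + β') = B α β + B α β')
    (hsymm : ∀ α β : Q, B α β = B β α)
    (heven : ∀ α : Q, 2 ∣ B α α)
    (ε₁ ε₂ : Q → Q → ℤˣ)
    (hbml₁ : ∀ α α' β : Q, ε₁ (α + α') β = ε₁ α β * ε₁ α' β)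
    (hbmr₁ : ∀ α β β' : Q, ε₁ α (β + β') = ε₁ α β * ε₁ α β')
    (hdiag₁ : ∀ α : Q, ε₁ α α = (-1 : ℤˣ) ^ (B α α / 2))
    (hbml₂ : ∀ α α' β : Q, ε₂ (α + α') β = ε₂ α β * ε₂ α' β)
    (hbmr₂ : ∀ α β β' : Q, ε₂ α (β + β') = ε₂ α β * ε₂ α β')
    (hdiag₂ : ∀ α : Q, ε₂ α α = (-1 : ℤˣ) ^ (B α α / 2)) :
    ∃ η : Q → ℤˣ, ∀ α β : Q, ε₁ α β = η α * η β * η (α + β) * ε₂ α β := by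
  classical
  set δ : Q → Q → ℤˣ := fun α β => ε₁ α β * ε₂ α β with hδdef
  have hδl : ∀ α α' β : Q, δ (α + α') β = δ α β * δ α' β := by
    intro α α' β
    simp only [hδdef, hbml₁, hbml₂]
    exact mul_mul_mul_comm _ _ _ _
  have hδr : ∀ α β β' : Q, δ α (β + β') = δ α β * δ α β' := by
    intro α β β'
    simp only [hδdef, hbmr₁, hbmr₂]
    exact mul_mul_mul_comm _ _ _ _
  have hδdiag : ∀ α : Q, δ α α = 1 := by
    intro α
    simp only [hδdef, hdiag₁ α, hdiag₂ α, Int.units_mul_self]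
  have hδsymm : ∀ α β : Q, δ α β = δ β α := by
    intro α β
    have h := hδdiag (α + β)
    rw [hδl, hδr, hδr, hδdiag, hδdiag, one_mul, mul_one] at h
    rw [eq_inv_of_mul_eq_one_left h, Int.units_inv_eq_self]
  set n := Module.finrank ℤ Q with hn
  set b : Module.Basis (Fin n) ℤ Q := Module.finBasis ℤ Q with hb
  set r : Q → Fin n → ℤ := fun x i => b.repr x i with hr
  have hradd : ∀ x y : Q, ∀ i, r (x + y) i = r x i + r y i := by
    intro x y i; simp [hr]
  have expand1 : ∀ x y : Q, δ x y = ∏ i, δ (b i) y ^ r x i := by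
    intro x y
    let φ : Q →+ Additive ℤˣ :=
      AddMonoidHom.mk' (fun α => Additive.ofMul (δ α y)) (by intro a c; simp [hδl])
    have hx : (∑ i, r x i • b i) = x := b.sum_repr x
    have h1 : δ x y = Additive.toMul (φ (∑ i, r x i • b i)) := by rw [hx]; rfl
    rw [h1, map_sum, toMul_sum]
    refine Finset.prod_congr rfl fun i _ => ?_
    rw [map_zsmul, toMul_zsmul]
    rfl
  have expand1' : ∀ x y : Q, δ x y = ∏ j, δ x (b j) ^ r y j := by
    intro x y
    let ψ : Q →+ Additive ℤˣ :=
      AddMonoidHom.mk' (fun β => Additive.ofMul (δ x β)) (by intro a c; simp [hδr])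
    have hy : (∑ j, r y j • b j) = y := b.sum_repr y
    have h1 : δ x y = Additive.toMul (ψ (∑ j, r y j • b j)) := by rw [hy]; rfl
    rw [h1, map_sum, toMul_sum]
    refine Finset.prod_congr rfl fun j _ => ?_
    rw [map_zsmul, toMul_zsmul]
    rfl
  have expand2 : ∀ x y : Q,
      δ x y = ∏ p ∈ (Finset.univ ×ˢ Finset.univ : Finset (Fin n × Fin n)),
        δ (b p.1) (b p.2) ^ (r x p.1 * r y p.2) := by
    intro x y
    rw [Finset.prod_product' (f := fun i j => δ (b i) (b j) ^ (r x i * r y j)),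
      expand1 x y]
    refine Finset.prod_congr rfl fun i _ => ?_
    rw [expand1' (b i) y, ← Finset.prod_zpow]
    refine Finset.prod_congr rfl fun j _ => ?_
    rw [← zpow_mul, mul_comm (r y j)]
  -- the candidate η
  set T : Finset (Fin n × Fin n) :=
    Finset.univ.filter (fun p => p.1 < p.2) with hT
  set η : Q → ℤˣ := fun x => ∏ p ∈ T, δ (b p.1) (b p.2) ^ (r x p.1 * r x p.2)
    with hη
  have key : ∀ x y : Q, η x * η y * η (x + y) = δ x y := by
    intro x y
    -- expand η (x+y)
    have hxy : η (x + y) = η x * η y *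
        ((∏ p ∈ T, δ (b p.1) (b p.2) ^ (r x p.1 * r y p.2)) *
         (∏ p ∈ T, δ (b p.1) (b p.2) ^ (r y p.1 * r x p.2))) := by
      rw [hη]
      simp only [hradd]
      rw [← Finset.prod_mul_distrib, ← Finset.prod_mul_distrib,
        ← Finset.prod_mul_distrib]
      refine Finset.prod_congr rfl fun p _ => ?_
      rw [← zpow_add, ← zpow_add, ← zpow_add]
      congr 1
      ring
    rw [hxy]
    have hsq : ∀ u : ℤˣ, u * u = 1 := Int.units_mul_self
    have h2 : η x * η y * (η x * η y *
        ((∏ p ∈ T, δ (b p.1) (b p.2) ^ (r x p.1 * r y p.2)) *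
         (∏ p ∈ T, δ (b p.1) (b p.2) ^ (r y p.1 * r x p.2)))) =
        (∏ p ∈ T, δ (b p.1) (b p.2) ^ (r x p.1 * r y p.2)) *
        (∏ p ∈ T, δ (b p.1) (b p.2) ^ (r y p.1 * r x p.2)) := by
      have : η x * η y * (η x * η y) = 1 := by
        rw [mul_mul_mul_comm, hsq, hsq, one_mul]
      rw [← mul_assoc, this, one_mul]
    rw [h2, expand2 x y]
    -- split the full product into <, =, > parts
    rw [← Finset.prod_filter_mul_prod_filter_not (Finset.univ ×ˢ Finset.univ)
      (fun p => p.1 < p.2) (fun p => δ (b p.1) (b p.2) ^ (r x p.1 * r y p.2))]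
    have hfil : (Finset.univ ×ˢ Finset.univ : Finset (Fin n × Fin n)).filter
        (fun p => p.1 < p.2) = T := by
      simp [hT]
    rw [hfil]
    congr 1
    -- remaining: product over ¬(p.1 < p.2)
    rw [← Finset.prod_filter_mul_prod_filter_not
      ((Finset.univ ×ˢ Finset.univ : Finset (Fin n × Fin n)).filter
        (fun p => ¬ p.1 < p.2))
      (fun p => p.1 = p.2) (fun p => δ (b p.1) (b p.2) ^ (r x p.1 * r y p.2))]
    have hdiagprod : ∀ p ∈ (((Finset.univ ×ˢ Finset.univ :
        Finset (Fin n × Fin n)).filter (fun p => ¬ p.1 < p.2)).filter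
        (fun p => p.1 = p.2)), δ (b p.1) (b p.2) ^ (r x p.1 * r y p.2) = 1 := by
      intro p hp
      simp only [Finset.mem_filter] at hp
      rw [hp.2, hδdiag, one_zpow]
    rw [Finset.prod_eq_one hdiagprod, one_mul]
    -- the > part maps to T by swapping
    have hgt : (((Finset.univ ×ˢ Finset.univ : Finset (Fin n × Fin n)).filter
        (fun p => ¬ p.1 < p.2)).filter (fun p => ¬ p.1 = p.2)) = T.map
        ⟨Prod.swap, Prod.swap_injective⟩ := by
      ext p
      simp only [Finset.mem_filter, Finset.mem_map, Finset.mem_univ,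
        Finset.mem_product, hT, Function.Embedding.coeFn_mk]
      constructor
      · intro ⟨⟨_, h1⟩, h2⟩
        exact ⟨p.swap, by simp [lt_of_le_of_ne (not_lt.mp h1) (Ne.symm h2)], by simp⟩
      · rintro ⟨q, hq, rfl⟩
        simp only [Finset.mem_filter, Finset.mem_univ, true_and] at hq
        exact ⟨⟨⟨trivial, trivial⟩, not_lt.mpr hq.le⟩, fun h => absurd h.symm (ne_of_lt hq)⟩
    rw [hgt, Finset.prod_map]
    refine Finset.prod_congr rfl fun p _ => ?_
    simp only [Function.Embedding.coeFn_mk, Prod.fst_swap, Prod.snd_swap]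
    rw [hδsymm (b p.2) (b p.1)]
    congr 1
    ring
  refine ⟨η, fun α β => ?_⟩
  have h := key α β
  have : η α * η β * η (α + β) * ε₂ α β = ε₁ α β * (ε₂ α β * ε₂ α β) := by
    rw [h, hδdef]
    simp only
    rw [mul_assoc]
  rw [this, Int.units_mul_self, mul_one]
end

section
/- Let Q be an even integral lattice, let σ : Q → Q be an isometry (an additive automorphism with (σα|σβ) = (α|β) for all α, β ∈ Q), and let ε : Q × Q → {±1} be a bimultiplicative map with ε(α,α) = (−1)^{(α|α)/2} for all α ∈ Q. Then there exists a function η : Q → {±1} such that η(α+β)·ε(σα,σβ) = η(α)·η(β)·ε(α,β) for all α, β ∈ Q. -/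
theorem exists_eta_aux (Q : Type*) [AddCommGroup Q] [Module.Free ℤ Q] [Module.Finite ℤ Q]
    (f : Q → Q → ℤˣ)
    (hfl : ∀ α α' β : Q, f (α + α') β = f α β * f α' β)
    (hfr : ∀ α β β' : Q, f α (β + β') = f α β * f α β')
    (hdiagf : ∀ α : Q, f α α = 1) :
    ∃ η : Q → ℤˣ, ∀ α β : Q, η (α + β) = η α * η β * f α β := by
  classical
  have hsq : ∀ u : ℤˣ, u * u = 1 := fun u => by
    rcases Int.units_eq_one_or u with h | h <;> simp [h]
  have hinv : ∀ u : ℤˣ, u⁻¹ = u := fun u => inv_eq_of_mul_eq_one_right (hsq u)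
  have hfsymm : ∀ α β : Q, f β α = f α β := by
    intro α β
    have h1 : f α β * f β α = 1 := by
      have h := hdiagf (α + β)
      rw [hfl, hfr, hfr, hdiagf, hdiagf, one_mul, mul_one] at h
      exact h
    exact mul_left_cancel (h1.trans (hsq (f α β)).symm)
  have hzl : ∀ β : Q, f 0 β = 1 := by
    intro β
    have h := hfl 0 0 β
    rw [add_zero] at h
    exact (mul_left_cancel (a := f 0 β) (by rw [mul_one, ← h])).symm
  have hnl : ∀ α β : Q, f (-α) β = f α β := by
    intro α β
    have h : f α β * f (-α) β = 1 := by rw [← hfl, add_neg_cancel, hzl]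
    exact mul_left_cancel (h.trans (hsq (f α β)).symm)
  have hzsmul : ∀ (n : ℤ) (α β : Q), f (n • α) β = f α β ^ n := by
    intro n α β
    induction n using Int.induction_on with
    | zero => simp [hzl]
    | succ k ih => rw [add_smul, one_smul, hfl, ih, zpow_add, zpow_one]
    | pred k ih =>
        rw [sub_smul, one_smul, sub_eq_add_neg, hfl, ih, hnl, zpow_sub, zpow_one, hinv]
  have hzsmulr : ∀ (n : ℤ) (α β : Q), f α (n • β) = f α β ^ n := by
    intro n α β
    rw [show f α (n • β) = f (n • β) α from hfsymm _ _, hzsmul, hfsymm]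
  obtain ⟨ι, b⟩ := Module.Free.exists_basis (R := ℤ) (M := Q)
  haveI : Finite ι := Module.Finite.finite_basis b
  haveI : Fintype ι := Fintype.ofFinite ι
  letI : LinearOrder ι := LinearOrder.lift' (Fintype.equivFin ι) (Equiv.injective _)
  have hsuml : ∀ (s : Finset ι) (v : ι → Q) (β : Q),
      f (∑ i ∈ s, v i) β = ∏ i ∈ s, f (v i) β := by
    intro s v β
    induction s using Finset.induction_on with
    | empty => simp [hzl]
    | insert c s' hx ih => rw [Finset.sum_insert hx, hfl, ih, Finset.prod_insert hx]
  have hsumr : ∀ (s : Finset ι) (v : ι → Q) (α : Q),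
      f α (∑ i ∈ s, v i) = ∏ i ∈ s, f α (v i) := by
    intro s v α
    rw [show f α (∑ i ∈ s, v i) = f (∑ i ∈ s, v i) α from hfsymm _ _, hsuml]
    exact Finset.prod_congr rfl fun i _ => hfsymm _ _
  set g : ι → ι → ℤˣ := fun i j => f (b i) (b j) with hg
  set a : Q → ι → ℤ := fun α i => b.repr α i with ha
  have hrepr : ∀ α : Q, ∑ i, a α i • b i = α := fun α => b.sum_repr α
  have hexp : ∀ α β : Q, f α β = ∏ i, ∏ j, g i j ^ (a α i * a β j) := by
    intro α β
    conv_lhs => rw [← hrepr α, ← hrepr β]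
    rw [hsuml]
    refine Finset.prod_congr rfl fun i _ => ?_
    rw [hzsmul, hsumr]
    have : (∏ j, f (b i) (a β j • b j)) = ∏ j, g i j ^ (a β j) :=
      Finset.prod_congr rfl fun j _ => hzsmulr _ _ _
    rw [this, ← Finset.prod_zpow]
    refine Finset.prod_congr rfl fun j _ => ?_
    rw [← zpow_mul, mul_comm (a β j)]
  set S : Finset (ι × ι) := Finset.univ.filter (fun p => p.1 < p.2) with hS
  have key : ∀ α β : Q,
      f α β = ∏ p ∈ S, g p.1 p.2 ^ (a α p.1 * a β p.2 + a β p.1 * a α p.2) := by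
    intro α β
    rw [hexp, ← Finset.prod_product' (f := fun i j => g i j ^ (a α i * a β j)),
      Finset.univ_product_univ,
      ← Finset.prod_filter_mul_prod_filter_not Finset.univ (fun p : ι × ι => p.1 < p.2),
      ← Finset.prod_filter_mul_prod_filter_not
        (Finset.univ.filter fun p : ι × ι => ¬ p.1 < p.2) (fun p : ι × ι => p.2 < p.1)]
    have e1 : ((Finset.univ.filter fun p : ι × ι => ¬ p.1 < p.2).filter
        fun p : ι × ι => p.2 < p.1) = Finset.univ.filter fun p : ι × ι => p.2 < p.1 := by
      ext p
      simp only [Finset.mem_filter, Finset.mem_univ, true_and]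
      exact ⟨fun h => h.2, fun h => ⟨asymm h, h⟩⟩
    have e2 : ((Finset.univ.filter fun p : ι × ι => ¬ p.1 < p.2).filter
        fun p : ι × ι => ¬ p.2 < p.1) = Finset.univ.filter fun p : ι × ι => p.1 = p.2 := by
      ext p
      simp only [Finset.mem_filter, Finset.mem_univ, true_and]
      constructor
      · rintro ⟨h1, h2⟩; exact le_antisymm (not_lt.mp h2) (not_lt.mp h1)
      · intro h; rw [h]; exact ⟨lt_irrefl _, lt_irrefl _⟩
    rw [e1, e2]
    have e3 : (∏ p ∈ Finset.univ.filter fun p : ι × ι => p.1 = p.2,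
        g p.1 p.2 ^ (a α p.1 * a β p.2)) = 1 := by
      refine Finset.prod_eq_one fun p hp => ?_
      simp only [Finset.mem_filter] at hp
      rw [← hp.2, hg]
      simp [hdiagf]
    rw [e3, mul_one]
    have e4 : (∏ p ∈ Finset.univ.filter fun p : ι × ι => p.2 < p.1,
        g p.1 p.2 ^ (a α p.1 * a β p.2)) =
        ∏ p ∈ S, g p.1 p.2 ^ (a β p.1 * a α p.2) := by
      refine Finset.prod_nbij' Prod.swap Prod.swap ?_ ?_ ?_ ?_ ?_
      · intro p hp; simp only [Finset.mem_filter, Finset.mem_univ, true_and] at hp ⊢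
        simpa [hS] using hp
      · intro p hp; simp only [hS, Finset.mem_filter, Finset.mem_univ, true_and] at hp ⊢
        simpa using hp
      · intro p _; simp
      · intro p _; simp
      · intro p hp
        simp only [Prod.fst_swap, Prod.snd_swap]
        rw [show g p.1 p.2 = g p.2 p.1 from (hfsymm _ _).symm, mul_comm]
    rw [e4, ← Finset.prod_mul_distrib]
    refine Finset.prod_congr rfl fun p _ => ?_
    rw [← zpow_add]
  refine ⟨fun α => ∏ p ∈ S, g p.1 p.2 ^ (a α p.1 * a α p.2), ?_⟩
  intro α β
  have hadd : ∀ i, a (α + β) i = a α i + a β i := by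
    intro i; simp [ha, map_add]
  rw [key, ← Finset.prod_mul_distrib, ← Finset.prod_mul_distrib]
  refine Finset.prod_congr rfl fun p _ => ?_
  rw [hadd, hadd, ← zpow_add, ← zpow_add]
  congr 1
  ring

/-- For an isometry `σ` of an even integral lattice `Q` and a bimultiplicative
2-cocycle `ε` with `ε(α,α) = (-1)^(|α|²/2)`, there is a function
`η : Q → {±1}` with `η(α+β)·ε(σα,σβ) = η(α)·η(β)·ε(α,β)`. -/
theorem stmt_2 (Q : Type*) [AddCommGroup Q] [Module.Free ℤ Q] [Module.Finite ℤ Q]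
    (B : Q → Q → ℤ)
    (haddl : ∀ α α' β : Q, B (α + α') β = B α β + B α' β)
    (haddr : ∀ α β β' : Q, B α (β + β') = B α β + B α β')
    (hsymm : ∀ α β : Q, B α β = B β α)
    (heven : ∀ α : Q, 2 ∣ B α α)
    (σ : Q ≃+ Q)
    (hiso : ∀ α β : Q, B (σ α) (σ β) = B α β)
    (ε : Q → Q → ℤˣ)
    (hbml : ∀ α α' β : Q, ε (α + α') β = ε α β * ε α' β)
    (hbmr : ∀ α β β' : Q, ε α (β + β') = ε α β * ε α β')
    (hdiag : ∀ α : Q, ε α α = (-1 : ℤˣ) ^ (B α α / 2)) :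
    ∃ η : Q → ℤˣ, ∀ α β : Q, η (α + β) * ε (σ α) (σ β) = η α * η β * ε α β := by
  have hsq : ∀ u : ℤˣ, u * u = 1 := fun u => by
    rcases Int.units_eq_one_or u with h | h <;> simp [h]
  set f : Q → Q → ℤˣ := fun α β => ε (σ α) (σ β) * ε α β with hf
  have hfl : ∀ α α' β : Q, f (α + α') β = f α β * f α' β := by
    intro α α' β
    simp only [hf, map_add, hbml]
    exact mul_mul_mul_comm _ _ _ _
  have hfr : ∀ α β β' : Q, f α (β + β') = f α β * f α β' := by
    intro α β β'
    simp only [hf, map_add, hbmr]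
    exact mul_mul_mul_comm _ _ _ _
  have hdiagf : ∀ α : Q, f α α = 1 := by
    intro α
    simp only [hf]
    rw [hdiag, hdiag, hiso]
    exact hsq _
  obtain ⟨η, hη⟩ := exists_eta_aux Q f hfl hfr hdiagf
  refine ⟨η, fun α β => ?_⟩
  rw [hη, mul_assoc]
  congr 1
  simp only [hf]
  rw [mul_comm (ε (σ α) (σ β)) (ε α β), mul_assoc, hsq, mul_one]
end

section
/- Let Q be an even integral lattice, let σ : Q → Q be an isometry, and let ε : Q × Q → {±1} be a bimultiplicative map with ε(α,α) = (−1)^{(α|α)/2} for all α ∈ Q. Then the function η : Q → {±1} satisfying η(α+β)·ε(σα,σβ) = η(α)·η(β)·ε(α,β) for all α, β ∈ Q can be chosen so that, in addition, η(α) = 1 for every α ∈ Q with σα = α. -/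
section aux
variable {Q : Type*} [AddCommGroup Q] [Module.Free ℤ Q] [Module.Finite ℤ Q]

/-- Any symmetric biadditive map into `Additive ℤˣ` with trivial diagonal is the
"polarization defect" of some function `q`. -/
theorem exists_quadratic (c : Q →+ Q →+ Additive ℤˣ)
    (hsym : ∀ α β, c α β = c β α) (hd : ∀ α, c α α = 0) :
    ∃ q : Q → Additive ℤˣ, ∀ α β, q (α + β) = q α + q β + c α β := by
  classical
  set e := Module.finBasis ℤ Q with he
  set n := Module.finrank ℤ Q with hn
  have expand : ∀ (g : Q →+ Additive ℤˣ) (α : Q), g α = ∑ i, e.repr α i • g (e i) := by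
    intro g α
    conv_lhs => rw [← e.sum_repr α]
    rw [map_sum]
    simp [map_zsmul]
  set T : Finset (Fin n × Fin n) := Finset.univ.filter (fun p => p.1 < p.2) with hT
  refine ⟨fun α => ∑ p ∈ T, (e.repr α p.1 * e.repr α p.2) • c (e p.1) (e p.2), ?_⟩
  intro α β
  have hc : ∀ α β : Q, c α β = ∑ p : Fin n × Fin n,
      (e.repr α p.1 * e.repr β p.2) • c (e p.1) (e p.2) := by
    intro α β
    rw [Fintype.sum_prod_type]
    rw [show c α β = c.flip β α from rfl, expand (c.flip β) α]
    simp only [AddMonoidHom.flip_apply]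
    refine Finset.sum_congr rfl fun i _ => ?_
    rw [expand (c (e i)) β, Finset.smul_sum]
    refine Finset.sum_congr rfl fun j _ => ?_
    rw [smul_smul]
  have hsplit : ∀ α β : Q, c α β =
      ∑ p ∈ T, (e.repr α p.1 * e.repr β p.2) • c (e p.1) (e p.2)
      + ∑ p ∈ T, (e.repr α p.2 * e.repr β p.1) • c (e p.1) (e p.2) := by
    intro α β
    rw [hc α β]
    rw [← Finset.sum_filter_add_sum_filter_not Finset.univ (fun p : Fin n × Fin n => p.1 < p.2)]
    congr 1
    rw [← Finset.sum_filter_add_sum_filter_not _ (fun p : Fin n × Fin n => p.2 < p.1)]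
    have hdiagsum : ∑ p ∈ (Finset.univ.filter (fun p : Fin n × Fin n => ¬ p.1 < p.2)).filter
        (fun p => ¬ p.2 < p.1), (e.repr α p.1 * e.repr β p.2) • c (e p.1) (e p.2) = 0 := by
      refine Finset.sum_eq_zero fun p hp => ?_
      simp only [Finset.mem_filter] at hp
      have : p.1 = p.2 := le_antisymm (not_lt.mp hp.2) (not_lt.mp hp.1.2)
      rw [this, hd, smul_zero]
    rw [hdiagsum, add_zero]
    refine Finset.sum_nbij' (fun p => Prod.swap p) (fun p => Prod.swap p) ?_ ?_ ?_ ?_ ?_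
    · intro p hp; simp only [hT, Finset.mem_filter] at hp ⊢
      exact ⟨Finset.mem_univ _, hp.2⟩
    · intro p hp; simp only [hT, Finset.mem_filter] at hp ⊢
      exact ⟨⟨Finset.mem_univ _, not_lt.mpr (le_of_lt hp.2)⟩, hp.2⟩
    · intro p _; simp
    · intro p _; simp
    · intro p hp; simp only [Prod.fst_swap, Prod.snd_swap, hsym (e p.2) (e p.1)]
  have hrepr : ∀ i, e.repr (α + β) i = e.repr α i + e.repr β i := by intro i; rw [map_add]; rfl
  rw [hsplit α β]
  rw [← Finset.sum_add_distrib, ← Finset.sum_add_distrib, ← Finset.sum_add_distrib]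
  refine Finset.sum_congr rfl fun p _ => ?_
  rw [hrepr, hrepr, ← add_smul, ← add_smul, ← add_smul]
  congr 1
  ring
end aux

/-- The function `η` with `η(α+β)·ε(σα,σβ) = η(α)·η(β)·ε(α,β)` can be chosen
so that `η(α) = 1` whenever `σα = α`. -/
theorem stmt_3 (Q : Type*) [AddCommGroup Q] [Module.Free ℤ Q] [Module.Finite ℤ Q]
    (B : Q → Q → ℤ)
    (haddl : ∀ α α' β : Q, B (α + α') β = B α β + B α' β)
    (haddr : ∀ α β β' : Q, B α (β + β') = B α β + B α β')
    (hsymm : ∀ α β : Q, B α β = B β α)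
    (heven : ∀ α : Q, 2 ∣ B α α)
    (σ : Q ≃+ Q)
    (hiso : ∀ α β : Q, B (σ α) (σ β) = B α β)
    (ε : Q → Q → ℤˣ)
    (hbml : ∀ α α' β : Q, ε (α + α') β = ε α β * ε α' β)
    (hbmr : ∀ α β β' : Q, ε α (β + β') = ε α β * ε α β')
    (hdiag : ∀ α : Q, ε α α = (-1 : ℤˣ) ^ (B α α / 2)) :
    ∃ η : Q → ℤˣ,
      (∀ α β : Q, η (α + β) * ε (σ α) (σ β) = η α * η β * ε α β) ∧
      (∀ α : Q, σ α = α → η α = 1) := by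
  classical
  have hu : ∀ u : ℤˣ, u * u = 1 := Int.units_mul_self
  have hsq : ∀ u v : ℤˣ, u * v = 1 → u = v := by
    intro u v h
    rcases Int.units_eq_one_or u with h1 | h1 <;> rcases Int.units_eq_one_or v with h2 | h2 <;>
      simp [h1, h2] at h ⊢
  -- commutation relation for ε
  have hcomm : ∀ α β : Q, ε α β * ε β α = (-1 : ℤˣ) ^ (B α β) := by
    intro α β
    obtain ⟨a, ha⟩ := heven α
    obtain ⟨b, hb⟩ := heven β
    have e1 : ε (α + β) (α + β) = (-1 : ℤˣ) ^ a * (ε α β * ε β α) * (-1 : ℤˣ) ^ b := by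
      rw [hbml, hbmr, hbmr, hdiag α, hdiag β, ha, hb,
        Int.mul_ediv_cancel_left a two_ne_zero, Int.mul_ediv_cancel_left b two_ne_zero]
      ac_rfl
    have e2 : ε (α + β) (α + β) = (-1 : ℤˣ) ^ a * (-1 : ℤˣ) ^ (B α β) * (-1 : ℤˣ) ^ b := by
      have hB : B (α + β) (α + β) = 2 * (a + B α β + b) := by
        rw [haddl, haddr, haddr, ha, hb, hsymm β α]; ring
      rw [hdiag, hB, Int.mul_ediv_cancel_left _ two_ne_zero, zpow_add, zpow_add]
    have := e1.symm.trans e2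
    have := mul_right_cancel this
    exact mul_left_cancel this
  -- the biadditive defect map c
  have hcl : ∀ α α' β : Q,
      ε (α + α') β * ε (σ (α + α')) (σ β) = (ε α β * ε (σ α) (σ β)) * (ε α' β * ε (σ α') (σ β)) := by
    intro α α' β
    rw [hbml, map_add, hbml]
    ac_rfl
  have hcr : ∀ α β β' : Q,
      ε α (β + β') * ε (σ α) (σ (β + β')) = (ε α β * ε (σ α) (σ β)) * (ε α β' * ε (σ α) (σ β')) := by
    intro α β β'
    rw [hbmr, map_add, hbmr]
    ac_rfl
  set c : Q →+ Q →+ Additive ℤˣ := AddMonoidHom.mk'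
      (fun α => AddMonoidHom.mk' (fun β => Additive.ofMul (ε α β * ε (σ α) (σ β)))
        (fun β β' => by
          show Additive.ofMul (ε α (β + β') * ε (σ α) (σ (β + β')))
            = Additive.ofMul (ε α β * ε (σ α) (σ β)) + Additive.ofMul (ε α β' * ε (σ α) (σ β'))
          rw [← ofMul_mul, hcr]))
      (fun α α' => by
        refine AddMonoidHom.ext fun β => ?_
        show Additive.ofMul (ε (α + α') β * ε (σ (α + α')) (σ β))
          = Additive.ofMul (ε α β * ε (σ α) (σ β)) + Additive.ofMul (ε α' β * ε (σ α') (σ β))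
        rw [← ofMul_mul, hcl]) with hcdef
  have capp : ∀ α β : Q, c α β = Additive.ofMul (ε α β * ε (σ α) (σ β)) := fun _ _ => rfl
  have hsym : ∀ α β : Q, c α β = c β α := by
    intro α β
    rw [capp, capp]
    congr 1
    refine hsq _ _ ?_
    have : (ε α β * ε (σ α) (σ β)) * (ε β α * ε (σ β) (σ α))
        = (ε α β * ε β α) * (ε (σ α) (σ β) * ε (σ β) (σ α)) := by ac_rfl
    rw [this, hcomm, hcomm, hiso]
    exact hu _
  have hd : ∀ α : Q, c α α = 0 := by
    intro α
    rw [capp]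
    have : ε α α * ε (σ α) (σ α) = 1 := by
      rw [hdiag, hdiag, hiso]
      exact hu _
    rw [this]
    rfl
  obtain ⟨q, hq⟩ := exists_quadratic c hsym hd
  set η₀ : Q → ℤˣ := fun x => (q x).toMul with hη₀
  have hq' : ∀ α β : Q, η₀ (α + β) = η₀ α * η₀ β * (ε α β * ε (σ α) (σ β)) := by
    intro α β
    show (q (α + β)).toMul = _
    rw [hq α β, capp]
    rfl
  -- retraction onto the fixed subgroup
  set φ : Q →ₗ[ℤ] Q := σ.toAddMonoidHom.toIntLinearMap - LinearMap.id with hφdef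
  have hφ : ∀ x, φ x = σ x - x := fun _ => rfl
  obtain ⟨s, hs⟩ := Module.projective_lifting_property φ.rangeRestrict LinearMap.id
    φ.surjective_rangeRestrict
  have hsy : ∀ y : LinearMap.range φ, φ (s y) = (y : Q) := by
    intro y
    have h := LinearMap.ext_iff.mp hs y
    simp only [LinearMap.comp_apply, LinearMap.id_apply] at h
    have h2 : (φ.rangeRestrict (s y) : Q) = φ (s y) := rfl
    rw [← h2, h]
  set r : Q → Q := fun x => x - s (φ.rangeRestrict x) with hrdef
  have hr1 : ∀ x, σ (r x) = r x := by
    intro x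
    have h0 : φ (r x) = 0 := by
      show φ (x - s (φ.rangeRestrict x)) = 0
      rw [map_sub, hsy]
      have : ((φ.rangeRestrict x : LinearMap.range φ) : Q) = φ x := rfl
      rw [this, sub_self]
    rw [hφ] at h0
    exact sub_eq_zero.mp h0
  have hr2 : ∀ x, σ x = x → r x = x := by
    intro x hx
    have h0 : φ.rangeRestrict x = 0 := by
      apply Subtype.ext
      show φ x = 0
      rw [hφ, hx, sub_self]
    show x - s (φ.rangeRestrict x) = x
    rw [h0, map_zero, sub_zero]
  have hr3 : ∀ x y, r (x + y) = r x + r y := by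
    intro x y
    show x + y - s (φ.rangeRestrict (x + y)) = (x - _) + (y - _)
    rw [map_add, map_add]
    abel
  refine ⟨fun x => η₀ x * η₀ (r x), ?_, ?_⟩
  · intro α β
    have h2 : η₀ (r (α + β)) = η₀ (r α) * η₀ (r β) := by
      rw [hr3, hq' (r α) (r β), hr1 α, hr1 β, hu, mul_one]
    show η₀ (α + β) * η₀ (r (α + β)) * ε (σ α) (σ β) = _
    rw [hq' α β, h2]
    calc η₀ α * η₀ β * (ε α β * ε (σ α) (σ β)) * (η₀ (r α) * η₀ (r β)) * ε (σ α) (σ β)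
        = η₀ α * η₀ (r α) * (η₀ β * η₀ (r β)) * ε α β * (ε (σ α) (σ β) * ε (σ α) (σ β)) := by
          ac_rfl
      _ = η₀ α * η₀ (r α) * (η₀ β * η₀ (r β)) * ε α β := by rw [hu, mul_one]
  · intro α hα
    show η₀ α * η₀ (r α) = 1
    rw [hr2 α hα]
    exact hu _
end

section
/- Let L be a free ℤ-module of finite rank with a symmetric positive-definite bilinear form (·|·) extended ℝ-bilinearly to L⊗ℝ, and let λ ∈ L⊗ℝ. For q ∈ (0,1) the theta series θ_{λ+L}(q) = Σ_{α∈L} q^{(λ+α|λ+α)/2} converges, and lim_{q→1⁻} θ_{λ+L}(q)/θ_{L}(q) = 1, where θ_L(q) = Σ_{α∈L} q^{(α|α)/2}. -/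
open Real Filter Set

namespace ThetaAux

lemma summable_nat_exp_sq {a : ℝ} (ha : 0 < a) :
    Summable (fun m : ℕ => Real.exp (-(a * (m : ℝ) ^ 2))) := by
  refine Summable.of_nonneg_of_le (fun m => (Real.exp_pos _).le) (fun m => ?_)
    (summable_geometric_of_lt_one (Real.exp_pos (-a)).le
      (by rw [Real.exp_lt_one_iff]; linarith))
  rw [← Real.exp_nat_mul]
  apply Real.exp_le_exp.2
  rcases Nat.eq_zero_or_pos m with h | h
  · simp [h]
  · have h1 : (1 : ℝ) ≤ (m : ℝ) := by exact_mod_cast h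
    have h2 : (m:ℝ) ≤ (m:ℝ)^2 := by nlinarith
    nlinarith [mul_le_mul_of_nonneg_left h2 ha.le]

lemma summable_int_exp_sq {a : ℝ} (ha : 0 < a) :
    Summable (fun m : ℤ => Real.exp (-(a * (m : ℝ) ^ 2))) := by
  apply Summable.of_nat_of_neg_add_one
  · exact_mod_cast summable_nat_exp_sq ha
  · have := (summable_nat_exp_sq ha).comp_injective Nat.succ_injective
    refine this.congr fun n => ?_
    simp only [Function.comp_apply]
    push_cast
    ring_nf

lemma tsum_int_exp_le {β : ℝ} (hβ : 1 ≤ β) :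
    (∑' m : ℤ, Real.exp (-(β * (m : ℝ) ^ 2))) ≤ 3 := by
  have hβ0 : 0 < β := lt_of_lt_of_le one_pos hβ
  have hs := summable_int_exp_sq hβ0
  have hnat : Summable (fun n : ℕ => Real.exp (-(β * (n : ℝ) ^ 2))) := summable_nat_exp_sq hβ0
  have hneg : Summable (fun n : ℕ => Real.exp (-(β * ((-(n + 1) : ℤ) : ℝ) ^ 2))) := by
    have := hnat.comp_injective Nat.succ_injective
    refine this.congr fun n => ?_
    simp only [Function.comp_apply]; push_cast; ring_nf
  have he : Real.exp (-1) < 1 := by rw [Real.exp_lt_one_iff]; norm_num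
  have he0 : (0:ℝ) ≤ Real.exp (-1) := (Real.exp_pos _).le
  have hehalf : Real.exp (-1) ≤ 1/2 := by
    rw [Real.exp_neg]
    rw [inv_le_comm₀ (Real.exp_pos _) (by norm_num)]
    have := Real.add_one_le_exp 1
    linarith
  have hgeo : Summable (fun n : ℕ => Real.exp (-1 : ℝ) ^ n) :=
    summable_geometric_of_lt_one he0 he
  have hterm : ∀ n : ℕ, Real.exp (-(β * (n : ℝ) ^ 2)) ≤ Real.exp (-1 : ℝ) ^ n := by
    intro n
    rw [← Real.exp_nat_mul]
    apply Real.exp_le_exp.2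
    rcases Nat.eq_zero_or_pos n with h | h
    · simp [h]
    · have h1 : (1 : ℝ) ≤ (n : ℝ) := by exact_mod_cast h
      have h2 : (n:ℝ) ≤ (n:ℝ)^2 := by nlinarith
      nlinarith [mul_le_mul_of_nonneg_left h2 (by linarith : (0:ℝ) ≤ β)]
  have h1 : (∑' n : ℕ, Real.exp (-(β * (n : ℝ) ^ 2))) ≤ 2 := by
    calc (∑' n : ℕ, Real.exp (-(β * (n : ℝ) ^ 2))) ≤ ∑' n : ℕ, Real.exp (-1:ℝ) ^ n :=
          Summable.tsum_le_tsum hterm hnat hgeo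
    _ = (1 - Real.exp (-1))⁻¹ := tsum_geometric_of_lt_one he0 he
    _ ≤ 2 := by
        rw [inv_le_comm₀ (by linarith) (by norm_num)]
        linarith
  have h2 : (∑' n : ℕ, Real.exp (-(β * ((-(n + 1) : ℤ) : ℝ) ^ 2))) ≤ 1 := by
    have hterm2 : ∀ n : ℕ, Real.exp (-(β * ((-(n + 1) : ℤ) : ℝ) ^ 2))
        ≤ Real.exp (-1:ℝ) * Real.exp (-1:ℝ) ^ n := by
      intro n
      rw [← Real.exp_nat_mul, ← Real.exp_add]
      apply Real.exp_le_exp.2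
      push_cast
      have h1 : (0 : ℝ) ≤ (n : ℝ) := Nat.cast_nonneg n
      nlinarith
    calc (∑' n : ℕ, Real.exp (-(β * ((-(n + 1) : ℤ) : ℝ) ^ 2)))
        ≤ ∑' n : ℕ, Real.exp (-1:ℝ) * Real.exp (-1:ℝ) ^ n :=
          Summable.tsum_le_tsum hterm2 hneg (hgeo.mul_left _)
    _ = Real.exp (-1) * (1 - Real.exp (-1))⁻¹ := by
          rw [tsum_mul_left, tsum_geometric_of_lt_one he0 he]
    _ ≤ (1/2) * 2 := by
          have hpos : (0:ℝ) ≤ (1 - Real.exp (-1))⁻¹ := inv_nonneg.mpr (by linarith)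
          apply mul_le_mul hehalf ?_ hpos (by norm_num)
          rw [inv_le_comm₀ (by linarith) (by norm_num)]; linarith
    _ = 1 := by norm_num
  calc (∑' m : ℤ, Real.exp (-(β * (m : ℝ) ^ 2)))
      = (∑' n : ℕ, Real.exp (-(β * ((n:ℤ) : ℝ) ^ 2)))
        + ∑' n : ℕ, Real.exp (-(β * ((-(n + 1) : ℤ) : ℝ) ^ 2)) := by
        apply tsum_of_nat_of_neg_add_one
        · exact_mod_cast hnat
        · exact hneg
  _ ≤ 2 + 1 := by
        apply add_le_add ?_ h2
        calc (∑' n : ℕ, Real.exp (-(β * ((n:ℤ) : ℝ) ^ 2))) = ∑' n : ℕ, Real.exp (-(β * (n : ℝ) ^ 2)) := by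
              push_cast; rfl
        _ ≤ 2 := h1
  _ = 3 := by norm_num

lemma tsum_int_exp_sq_le {a : ℝ} (ha : 0 < a) (ha1 : a ≤ 1) :
    (∑' m : ℤ, Real.exp (-(a * (m : ℝ) ^ 2))) ≤ 6 / Real.sqrt a := by
  have hπ : (0:ℝ) < π := Real.pi_pos
  have hπ3 : (3:ℝ) < π := by have := Real.pi_gt_three; linarith
  have hπ4 : π < 4 := by have := Real.pi_lt_d2; linarith
  have haπ : 0 < a / π := div_pos ha hπ
  have key := Real.tsum_exp_neg_mul_int_sq haπ
  have lhs_eq : (∑' m : ℤ, Real.exp (-(a * (m : ℝ) ^ 2)))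
      = ∑' m : ℤ, Real.exp (-π * (a / π) * (m : ℝ) ^ 2) := by
    apply tsum_congr; intro m
    have h : -π * (a / π) = -a := by field_simp
    rw [h]; ring_nf
  have dual_le : (∑' m : ℤ, Real.exp (-π / (a / π) * (m : ℝ) ^ 2)) ≤ 3 := by
    have hc : -π / (a / π) = -(π^2/a) := by
      rw [div_div_eq_mul_div]; ring
    have : ∀ m : ℤ, Real.exp (-π / (a / π) * (m : ℝ) ^ 2)
        = Real.exp (-((π^2/a) * (m : ℝ) ^ 2)) := by
      intro m; rw [hc]; ring_nf
    rw [tsum_congr this]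
    apply tsum_int_exp_le
    rw [le_div_iff₀ ha]
    nlinarith
  have dual_pos : (0:ℝ) ≤ ∑' m : ℤ, Real.exp (-π / (a / π) * (m : ℝ) ^ 2) :=
    tsum_nonneg fun m => (Real.exp_pos _).le
  rw [lhs_eq, key]
  have hsq : (a / π : ℝ) ^ ((1:ℝ)/2) = Real.sqrt (a/π) := (Real.sqrt_eq_rpow _).symm
  have hsπ : Real.sqrt π ≤ 2 := by
    have h4 : Real.sqrt π ≤ Real.sqrt 4 := Real.sqrt_le_sqrt hπ4.le
    have : Real.sqrt 4 = 2 := by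
      rw [show (4:ℝ) = 2^2 by norm_num, Real.sqrt_sq (by norm_num : (0:ℝ) ≤ 2)]
    linarith
  have hsa : 0 < Real.sqrt a := Real.sqrt_pos.mpr ha
  rw [hsq, Real.sqrt_div ha.le]
  calc 1 / (Real.sqrt a / Real.sqrt π) * ∑' m : ℤ, Real.exp (-π / (a / π) * (m : ℝ) ^ 2)
      = Real.sqrt π / Real.sqrt a * ∑' m : ℤ, Real.exp (-π / (a / π) * (m : ℝ) ^ 2) := by
        rw [one_div_div]
  _ ≤ (2 / Real.sqrt a) * 3 := by
        apply mul_le_mul ?_ dual_le dual_pos (by positivity)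
        gcongr
  _ = 6 / Real.sqrt a := by ring

set_option maxHeartbeats 1000000 in
lemma pi_prod_summable_tsum (n : ℕ) (g : ℤ → ℝ) (h0 : ∀ m, 0 ≤ g m) (hg : Summable g) :
    Summable (fun k : Fin n → ℤ => ∏ i, g (k i)) ∧
      (∑' k : Fin n → ℤ, ∏ i, g (k i)) = (∑' m, g m) ^ n := by
  induction n with
  | zero =>
    have hfun : (fun k : Fin 0 → ℤ => ∏ i, g (k i)) = fun _ => (1:ℝ) :=
      funext fun k => by simp
    constructor
    · rw [hfun]; exact summable_of_finite_support (Set.toFinite _)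
    · rw [hfun, tsum_eq_single (fun i => (0:ℤ)) (fun b hb => absurd (Subsingleton.elim b _) hb)]
      simp
  | succ n ih =>
    set E := (Fin.consEquiv fun _ : Fin (n+1) => ℤ).symm with hE
    have hsum2 : Summable (fun p : ℤ × (Fin n → ℤ) => g p.1 * ∏ i, g (p.2 i)) :=
      Summable.mul_of_nonneg (f := g) (g := fun k : Fin n → ℤ => ∏ i, g (k i)) hg ih.1 h0
        (fun k => Finset.prod_nonneg fun i _ => h0 _)
    have key : ∀ k : Fin (n+1) → ℤ, ∏ i, g (k i) = g (k 0) * ∏ i : Fin n, g (k i.succ) :=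
      fun k => Fin.prod_univ_succ _
    have hcomp : (fun k : Fin (n+1) → ℤ => ∏ i, g (k i))
        = (fun p : ℤ × (Fin n → ℤ) => g p.1 * ∏ i, g (p.2 i)) ∘ E := by
      funext k; rw [key k]; rfl
    constructor
    · rw [hcomp]; exact E.summable_iff.mpr hsum2
    · calc (∑' k : Fin (n+1) → ℤ, ∏ i, g (k i))
          = ∑' p : ℤ × (Fin n → ℤ), g p.1 * ∏ i, g (p.2 i) := by
            rw [hcomp]
            exact Equiv.tsum_eq E (fun p : ℤ × (Fin n → ℤ) => g p.1 * ∏ i, g (p.2 i))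
      _ = (∑' m, g m) * (∑' k : Fin n → ℤ, ∏ i, g (k i)) :=
            (Summable.tsum_mul_tsum hg ih.1 hsum2).symm
      _ = (∑' m, g m) ^ (n+1) := by rw [ih.2]; ring

lemma summable_exp_gauss (n : ℕ) (a : ℝ) (ha : 0 < a) :
    Summable (fun k : Fin n → ℤ => Real.exp (-(a * ∑ i, ((k i : ℝ))^2))) := by
  have hfun : ∀ k : Fin n → ℤ, Real.exp (-(a * ∑ i, ((k i : ℝ))^2))
      = ∏ i, Real.exp (-(a * ((k i : ℝ))^2)) := by
    intro k
    rw [← Real.exp_sum]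
    congr 1
    rw [Finset.mul_sum, ← Finset.sum_neg_distrib]
  have := (pi_prod_summable_tsum n (fun m => Real.exp (-(a * (m:ℝ)^2)))
    (fun m => (Real.exp_pos _).le) (summable_int_exp_sq ha)).1
  exact this.congr fun k => (hfun k).symm

lemma tsum_exp_gauss (n : ℕ) (a : ℝ) (ha : 0 < a) :
    (∑' k : Fin n → ℤ, Real.exp (-(a * ∑ i, ((k i : ℝ))^2)))
      = (∑' m : ℤ, Real.exp (-(a * (m:ℝ)^2))) ^ n := by
  have hfun : ∀ k : Fin n → ℤ, Real.exp (-(a * ∑ i, ((k i : ℝ))^2))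
      = ∏ i, Real.exp (-(a * ((k i : ℝ))^2)) := by
    intro k
    rw [← Real.exp_sum]
    congr 1
    rw [Finset.mul_sum, ← Finset.sum_neg_distrib]
  rw [tsum_congr hfun]
  exact (pi_prod_summable_tsum n (fun m => Real.exp (-(a * (m:ℝ)^2)))
    (fun m => (Real.exp_pos _).le) (summable_int_exp_sq ha)).2

section Quad

variable {n : ℕ}

noncomputable def Br (Gz : Matrix (Fin n) (Fin n) ℤ) (v w : Fin n → ℝ) : ℝ :=
  ∑ i, ∑ j, v i * w j * (Gz i j : ℝ)

def QI (k : Fin n → ℤ) : Fin n → ℝ := fun i => (k i : ℝ)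

variable (Gz : Matrix (Fin n) (Fin n) ℤ)

lemma Br_add_left (v v' w : Fin n → ℝ) :
    Br Gz (v + v') w = Br Gz v w + Br Gz v' w := by
  unfold Br
  rw [← Finset.sum_add_distrib]
  refine Finset.sum_congr rfl fun i _ => ?_
  rw [← Finset.sum_add_distrib]
  refine Finset.sum_congr rfl fun j _ => ?_
  simp only [Pi.add_apply]; ring

lemma Br_add_right (v w w' : Fin n → ℝ) :
    Br Gz v (w + w') = Br Gz v w + Br Gz v w' := by
  unfold Br
  rw [← Finset.sum_add_distrib]
  refine Finset.sum_congr rfl fun i _ => ?_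
  rw [← Finset.sum_add_distrib]
  refine Finset.sum_congr rfl fun j _ => ?_
  simp only [Pi.add_apply]; ring

lemma Br_smul_left (c : ℝ) (v w : Fin n → ℝ) :
    Br Gz (c • v) w = c * Br Gz v w := by
  unfold Br
  rw [Finset.mul_sum]
  refine Finset.sum_congr rfl fun i _ => ?_
  rw [Finset.mul_sum]
  refine Finset.sum_congr rfl fun j _ => ?_
  simp only [Pi.smul_apply, smul_eq_mul]; ring

lemma Br_smul_right (c : ℝ) (v w : Fin n → ℝ) :
    Br Gz v (c • w) = c * Br Gz v w := by
  unfold Br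
  rw [Finset.mul_sum]
  refine Finset.sum_congr rfl fun i _ => ?_
  rw [Finset.mul_sum]
  refine Finset.sum_congr rfl fun j _ => ?_
  simp only [Pi.smul_apply, smul_eq_mul]; ring

lemma Br_neg_left (v w : Fin n → ℝ) : Br Gz (-v) w = -Br Gz v w := by
  have h := Br_smul_left Gz (-1) v w
  simpa using h

lemma Br_neg_right (v w : Fin n → ℝ) : Br Gz v (-w) = -Br Gz v w := by
  have h := Br_smul_right Gz (-1) v w
  simpa using h

lemma Br_zero_left (w : Fin n → ℝ) : Br Gz 0 w = 0 := by
  unfold Br; simp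

lemma Br_symm (hsym : ∀ i j, Gz i j = Gz j i) (v w : Fin n → ℝ) :
    Br Gz v w = Br Gz w v := by
  unfold Br
  rw [Finset.sum_comm]
  refine Finset.sum_congr rfl fun j _ => ?_
  refine Finset.sum_congr rfl fun i _ => ?_
  rw [hsym i j]; ring

lemma Br_expand (hsym : ∀ i j, Gz i j = Gz j i) (u v : Fin n → ℝ) :
    Br Gz (u + v) (u + v) = Br Gz u u + 2 * Br Gz u v + Br Gz v v := by
  rw [Br_add_left, Br_add_right, Br_add_right, Br_symm Gz hsym v u]; ring

lemma Br_expand_sub (hsym : ∀ i j, Gz i j = Gz j i) (u v : Fin n → ℝ) :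
    Br Gz (u - v) (u - v) = Br Gz u u - 2 * Br Gz u v + Br Gz v v := by
  rw [sub_eq_add_neg, Br_expand Gz hsym, Br_neg_right, Br_neg_left, Br_neg_right]; ring

lemma Br_sq_smul (c : ℝ) (v : Fin n → ℝ) : Br Gz (c • v) (c • v) = c^2 * Br Gz v v := by
  rw [Br_smul_left, Br_smul_right]; ring

lemma Br_continuous : Continuous (fun v : Fin n → ℝ => Br Gz v v) := by
  unfold Br
  apply continuous_finset_sum
  intro i _
  apply continuous_finset_sum
  intro j _
  exact ((continuous_apply i).mul (continuous_apply j)).mul continuous_const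

lemma QI_zero : QI (0 : Fin n → ℤ) = 0 := by
  funext i; simp [QI]

lemma QI_neg (k : Fin n → ℤ) : QI (-k) = -QI k := by
  funext i; simp [QI]

lemma rat_clear (w : Fin n → ℚ) :
    ∃ (d : ℕ) (k : Fin n → ℤ), 0 < d ∧ ∀ i, (k i : ℚ) = w i * d := by
  refine ⟨∏ i, (w i).den, fun i => (w i).num * ((∏ i, (w i).den) / (w i).den : ℕ), ?_, ?_⟩
  · exact Finset.prod_pos fun i _ => (w i).pos
  · intro i
    have hdvd : (w i).den ∣ ∏ i, (w i).den :=
      Finset.dvd_prod_of_mem (fun i => (w i).den) (Finset.mem_univ i)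
    have hden : ((w i).den : ℚ) ≠ 0 := by exact_mod_cast (w i).den_nz
    have h1 : ((((∏ j, (w j).den) / (w i).den : ℕ)) : ℚ)
        = ((∏ j, (w j).den : ℕ) : ℚ) / ((w i).den : ℚ) := Nat.cast_div hdvd hden
    have hq : ((w i).num : ℚ) = w i * (w i).den :=
      (div_eq_iff hden).1 (Rat.num_div_den (w i))
    rw [Int.cast_mul, Int.cast_natCast, h1, hq]
    field_simp

lemma Br_psd (hsym : ∀ i j, Gz i j = Gz j i)
    (hpos0 : ∀ k : Fin n → ℤ, 0 ≤ Br Gz (QI k) (QI k)) :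
    ∀ v : Fin n → ℝ, 0 ≤ Br Gz v v := by
  have hrat : ∀ w : Fin n → ℚ, 0 ≤ Br Gz (fun i => (w i : ℝ)) (fun i => (w i : ℝ)) := by
    intro w
    obtain ⟨d, k, hd, hk⟩ := rat_clear w
    have hdR : (0:ℝ) < d := by exact_mod_cast hd
    have heq : (fun i => (w i : ℝ)) = (d : ℝ)⁻¹ • QI k := by
      funext i
      have h1 : ((k i : ℝ)) = (w i : ℝ) * d := by exact_mod_cast congrArg (fun q : ℚ => (q:ℝ)) (hk i)
      simp only [Pi.smul_apply, smul_eq_mul, QI]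
      rw [h1]; field_simp
    rw [heq, Br_sq_smul]
    exact mul_nonneg (by positivity) (hpos0 k)
  -- density
  have hclosed : IsClosed {v : Fin n → ℝ | 0 ≤ Br Gz v v} :=
    isClosed_le continuous_const (Br_continuous Gz)
  have hdense : Dense (Set.pi Set.univ fun _ : Fin n => Set.range ((↑) : ℚ → ℝ)) :=
    dense_pi Set.univ fun i _ => Rat.denseRange_cast
  intro v
  have hsub : (Set.pi Set.univ fun _ : Fin n => Set.range ((↑) : ℚ → ℝ))
      ⊆ {v : Fin n → ℝ | 0 ≤ Br Gz v v} := by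
    intro v hv
    choose w hw using fun i => hv i (Set.mem_univ i)
    have : v = fun i => (w i : ℝ) := funext fun i => (hw i).symm
    rw [Set.mem_setOf_eq, this]
    exact hrat w
  have : closure (Set.pi Set.univ fun _ : Fin n => Set.range ((↑) : ℚ → ℝ))
      ⊆ {v : Fin n → ℝ | 0 ≤ Br Gz v v} := hclosed.closure_subset_iff.mpr hsub
  exact this (hdense.closure_eq ▸ Set.mem_univ v)

lemma Br_single (v : Fin n → ℝ) (j0 : Fin n) :
    Br Gz v (Pi.single j0 1) = ∑ i, v i * (Gz i j0 : ℝ) := by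
  unfold Br
  refine Finset.sum_congr rfl fun i _ => ?_
  rw [Finset.sum_eq_single j0]
  · simp
  · intro j _ hj; simp [Pi.single_eq_of_ne hj]
  · intro h; exact absurd (Finset.mem_univ _) h

lemma Br_null (hsym : ∀ i j, Gz i j = Gz j i) (hpsd : ∀ u : Fin n → ℝ, 0 ≤ Br Gz u u)
    {v w : Fin n → ℝ} (hv : Br Gz v v = 0) : Br Gz v w = 0 := by
  by_contra hb
  have hkey : ∀ t : ℝ, 0 ≤ 2 * (t * Br Gz v w) + Br Gz w w := by
    intro t
    have h := hpsd (t • v + w)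
    rw [Br_expand Gz hsym, Br_sq_smul, Br_smul_left, hv] at h
    linarith
  have h2 := hkey (-(Br Gz w w + 1) / (2 * Br Gz v w))
  have h3 : 2 * (-(Br Gz w w + 1) / (2 * Br Gz v w) * Br Gz v w) = -(Br Gz w w + 1) := by
    field_simp
  rw [h3] at h2
  linarith

lemma Br_posdef (hsym : ∀ i j, Gz i j = Gz j i)
    (hpos : ∀ k : Fin n → ℤ, k ≠ 0 → 0 < Br Gz (QI k) (QI k)) :
    ∀ v : Fin n → ℝ, v ≠ 0 → 0 < Br Gz v v := by
  have hpos0 : ∀ k : Fin n → ℤ, 0 ≤ Br Gz (QI k) (QI k) := by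
    intro k
    by_cases hk : k = 0
    · rw [hk, QI_zero, Br_zero_left]
    · exact (hpos k hk).le
  have hpsd := Br_psd Gz hsym hpos0
  intro v hv
  rcases (hpsd v).lt_or_eq with h | h
  · exact h
  · exfalso
    have hnull : ∀ w, Br Gz v w = 0 := fun w => Br_null Gz hsym hpsd h.symm
    have hvec : ∀ j, ∑ i, v i * (Gz i j : ℝ) = 0 := fun j => by
      rw [← Br_single]; exact hnull _
    have hdetR : (Gz.map (Int.cast : ℤ → ℝ)).det = 0 := by
      rw [← Matrix.exists_vecMul_eq_zero_iff]
      refine ⟨v, hv, funext fun j => ?_⟩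
      simpa [Matrix.vecMul, dotProduct, Matrix.map_apply] using hvec j
    have hdetZ : Gz.det = 0 := by
      have h1 : ((Gz.det : ℤ) : ℝ) = (Gz.map (Int.cast : ℤ → ℝ)).det := by
        simpa [RingHom.mapMatrix_apply] using RingHom.map_det (Int.castRingHom ℝ) Gz
      have h2 : ((Gz.det : ℤ) : ℝ) = 0 := by rw [h1]; exact hdetR
      exact_mod_cast h2
    have hdetQ : (Gz.map (Int.cast : ℤ → ℚ)).det = 0 := by
      have h1 : ((Gz.det : ℤ) : ℚ) = (Gz.map (Int.cast : ℤ → ℚ)).det := by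
        simpa [RingHom.mapMatrix_apply] using RingHom.map_det (Int.castRingHom ℚ) Gz
      rw [← h1, hdetZ]
      norm_num
    obtain ⟨u, hu0, huv⟩ := Matrix.exists_vecMul_eq_zero_iff.mpr hdetQ
    obtain ⟨d, k, hd, hk⟩ := rat_clear u
    have hdQ : ((d : ℚ)) ≠ 0 := by exact_mod_cast hd.ne'
    have hkne : k ≠ 0 := by
      intro h0
      apply hu0
      funext i
      have hki := hk i
      rw [h0] at hki
      simp only [Pi.zero_apply, Int.cast_zero] at hki
      have := (mul_eq_zero.mp hki.symm).resolve_right hdQ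
      simpa using this
    have hkerQ : ∀ j, ∑ i, (k i : ℚ) * (Gz i j : ℚ) = 0 := by
      intro j
      have hj := congrFun huv j
      simp only [Matrix.vecMul, dotProduct, Matrix.map_apply, Pi.zero_apply] at hj
      calc ∑ i, (k i : ℚ) * (Gz i j : ℚ) = d * ∑ i, u i * (Gz i j : ℚ) := by
            rw [Finset.mul_sum]
            refine Finset.sum_congr rfl fun i _ => ?_
            rw [hk i]; ring
      _ = 0 := by rw [hj, mul_zero]
    have hkerR : ∀ j, ∑ i, (k i : ℝ) * (Gz i j : ℝ) = 0 := by
      intro j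
      have h1 := congrArg (fun q : ℚ => (q : ℝ)) (hkerQ j)
      push_cast at h1
      exact_mod_cast h1
    have hzero : Br Gz (QI k) (QI k) = 0 := by
      unfold Br QI
      rw [Finset.sum_comm]
      apply Finset.sum_eq_zero
      intro j _
      have h1 : ∑ i, (k i : ℝ) * (k j : ℝ) * (Gz i j : ℝ)
          = (k j : ℝ) * ∑ i, (k i : ℝ) * (Gz i j : ℝ) := by
        rw [Finset.mul_sum]
        refine Finset.sum_congr rfl fun i _ => by ring
      rw [h1, hkerR j, mul_zero]
    exact absurd hzero (ne_of_gt (hpos k hkne))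

lemma exists_posdef_lower (hsym : ∀ i j, Gz i j = Gz j i)
    (hpos : ∀ k : Fin n → ℤ, k ≠ 0 → 0 < Br Gz (QI k) (QI k)) :
    ∃ c : ℝ, 0 < c ∧ c ≤ 2 ∧ ∀ v : Fin n → ℝ, c * (∑ i, (v i) ^ 2) ≤ Br Gz v v := by
  have hpd := Br_posdef Gz hsym hpos
  rcases Nat.eq_zero_or_pos n with h0 | hn
  · refine ⟨1, one_pos, by norm_num, fun v => ?_⟩
    subst h0
    simp [Br]
  · haveI : Nonempty (Fin n) := ⟨⟨0, hn⟩⟩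
    obtain ⟨v₀, hv₀S, hmin'⟩ := (isCompact_sphere (0 : Fin n → ℝ) 1).exists_isMinOn
      (NormedSpace.sphere_nonempty.mpr zero_le_one) (Br_continuous Gz).continuousOn
    have hmin := isMinOn_iff.mp hmin'
    have hv₀norm : ‖v₀‖ = 1 := by simpa using hv₀S
    have hv₀ne : v₀ ≠ 0 := by
      intro h; rw [h] at hv₀norm; simp at hv₀norm
    have hc₀pos : 0 < Br Gz v₀ v₀ := hpd v₀ hv₀ne
    set c₀ := Br Gz v₀ v₀ with hc₀
    have hlow : ∀ v : Fin n → ℝ, c₀ * ‖v‖ ^ 2 ≤ Br Gz v v := by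
      intro v
      by_cases hv : v = 0
      · simp [hv, Br_zero_left]
      · have hnv : 0 < ‖v‖ := norm_pos_iff.mpr hv
        have hu : ‖v‖⁻¹ • v ∈ Metric.sphere (0 : Fin n → ℝ) 1 := by
          simp only [mem_sphere_zero_iff_norm, norm_smul, norm_inv, norm_norm]
          field_simp
        have hm := hmin _ hu
        rw [Br_sq_smul] at hm
        have h2 : c₀ * ‖v‖ ^ 2 ≤ ((‖v‖⁻¹) ^ 2 * Br Gz v v) * ‖v‖ ^ 2 :=
          mul_le_mul_of_nonneg_right hm (sq_nonneg _)
        calc c₀ * ‖v‖ ^ 2 ≤ ((‖v‖⁻¹) ^ 2 * Br Gz v v) * ‖v‖ ^ 2 := h2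
        _ = Br Gz v v := by field_simp
    have hnR : (0:ℝ) < n := by exact_mod_cast hn
    refine ⟨min (c₀ / n) 2, lt_min (div_pos hc₀pos hnR) two_pos, min_le_right _ _, fun v => ?_⟩
    have hsum : (∑ i, (v i) ^ 2) ≤ (n : ℝ) * ‖v‖ ^ 2 := by
      have h1 : ∀ i ∈ Finset.univ, (v i) ^ 2 ≤ ‖v‖ ^ 2 := by
        intro i _
        have := norm_le_pi_norm v i
        calc (v i)^2 = ‖v i‖^2 := by rw [Real.norm_eq_abs, sq_abs]
        _ ≤ ‖v‖^2 := pow_le_pow_left₀ (norm_nonneg _) this 2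
      calc (∑ i, (v i) ^ 2) ≤ Finset.univ.card • ‖v‖^2 := Finset.sum_le_card_nsmul _ _ _ h1
      _ = (n : ℝ) * ‖v‖ ^ 2 := by simp [nsmul_eq_mul]
    have hsumnn : (0:ℝ) ≤ ∑ i, (v i)^2 := Finset.sum_nonneg fun i _ => sq_nonneg _
    calc min (c₀ / n) 2 * (∑ i, (v i) ^ 2) ≤ (c₀ / n) * (∑ i, (v i) ^ 2) :=
          mul_le_mul_of_nonneg_right (min_le_left _ _) hsumnn
    _ ≤ (c₀ / n) * ((n:ℝ) * ‖v‖^2) := by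
          apply mul_le_mul_of_nonneg_left hsum (le_of_lt (div_pos hc₀pos hnR))
    _ = c₀ * ‖v‖^2 * (n:ℝ) / (n:ℝ) := by field_simp
    _ = c₀ * ‖v‖^2 := by field_simp
    _ ≤ Br Gz v v := hlow v

lemma Br_box_bound (M : ℝ) (hM : 0 ≤ M) (v : Fin n → ℝ) (hb : ∀ i, |v i| ≤ M) :
    Br Gz v v ≤ M ^ 2 * ∑ i, ∑ j, |(Gz i j : ℝ)| := by
  unfold Br
  rw [Finset.mul_sum]
  apply Finset.sum_le_sum
  intro i _
  rw [Finset.mul_sum]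
  apply Finset.sum_le_sum
  intro j _
  calc v i * v j * (Gz i j : ℝ) ≤ |v i * v j * (Gz i j : ℝ)| := le_abs_self _
  _ = |v i| * |v j| * |(Gz i j : ℝ)| := by rw [abs_mul, abs_mul]
  _ ≤ M * M * |(Gz i j : ℝ)| := by
        apply mul_le_mul_of_nonneg_right ?_ (abs_nonneg _)
        exact mul_le_mul (hb i) (hb j) (abs_nonneg _) hM
  _ = M ^ 2 * |(Gz i j : ℝ)| := by ring

end Quad

section Theta

variable {n : ℕ} (Gz : Matrix (Fin n) (Fin n) ℤ)

noncomputable def thL (l : Fin n → ℝ) (t : ℝ) : ℝ :=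
  ∑' k : Fin n → ℤ, Real.exp (-(t * Br Gz (l + QI k) (l + QI k) / 2))

lemma exp_neg_one_le_half : Real.exp (-1 : ℝ) ≤ 1/2 := by
  rw [Real.exp_neg, inv_le_comm₀ (Real.exp_pos _) (by norm_num)]
  have := Real.add_one_le_exp 1
  linarith

lemma thL_summable (c : ℝ) (hc : 0 < c)
    (hcQ : ∀ v : Fin n → ℝ, c * (∑ i, (v i) ^ 2) ≤ Br Gz v v)
    (l : Fin n → ℝ) {t : ℝ} (ht : 0 < t) :
    Summable (fun k : Fin n → ℤ => Real.exp (-(t * Br Gz (l + QI k) (l + QI k) / 2))) := by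
  have ha : 0 < t * c / 4 := by positivity
  refine Summable.of_nonneg_of_le (fun k => (Real.exp_pos _).le) (fun k => ?_)
    ((summable_exp_gauss n (t * c / 4) ha).mul_left
      (Real.exp (t * c / 2 * ∑ i, (l i) ^ 2)))
  rw [← Real.exp_add]
  apply Real.exp_le_exp.2
  have h1 := hcQ (l + QI k)
  have h2 : ∀ i, ((k i : ℝ)) ^ 2 / 2 - (l i) ^ 2 ≤ ((l + QI k) i) ^ 2 := by
    intro i
    simp only [Pi.add_apply, QI]
    nlinarith [sq_nonneg ((k i : ℝ) + 2 * l i)]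
  have h3 : (∑ i, ((k i : ℝ)) ^ 2) / 2 - ∑ i, (l i) ^ 2 ≤ ∑ i, ((l + QI k) i) ^ 2 := by
    have := Finset.sum_le_sum (fun i (_ : i ∈ Finset.univ) => h2 i)
    rw [Finset.sum_sub_distrib, ← Finset.sum_div] at this
    exact this
  have h4 : c * ((∑ i, ((k i : ℝ)) ^ 2) / 2 - ∑ i, (l i) ^ 2) ≤ Br Gz (l + QI k) (l + QI k) :=
    le_trans (mul_le_mul_of_nonneg_left h3 hc.le) h1
  nlinarith [mul_le_mul_of_nonneg_left h4 (half_pos ht).le]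

lemma thL_zero_nonneg_term (c : ℝ) (hc : 0 < c)
    (hcQ : ∀ v : Fin n → ℝ, c * (∑ i, (v i) ^ 2) ≤ Br Gz v v) (v : Fin n → ℝ) :
    0 ≤ Br Gz v v := by
  refine le_trans ?_ (hcQ v)
  positivity

lemma thL_upper (c : ℝ) (hc : 0 < c) (hc2 : c ≤ 2)
    (hcQ : ∀ v : Fin n → ℝ, c * (∑ i, (v i) ^ 2) ≤ Br Gz v v)
    {s : ℝ} (hs0 : 0 < s) (hs1 : s ≤ 1) :
    thL Gz 0 s ≤ (6 / Real.sqrt (c / 2)) ^ n * ((Real.sqrt s)⁻¹) ^ n := by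
  have ha : 0 < s * (c / 2) := by positivity
  have step1 : thL Gz 0 s ≤ ∑' k : Fin n → ℤ, Real.exp (-(s * (c / 2) * ∑ i, ((k i : ℝ)) ^ 2)) := by
    apply Summable.tsum_le_tsum ?_ (thL_summable Gz c hc hcQ 0 hs0) (summable_exp_gauss n _ ha)
    intro k
    apply Real.exp_le_exp.2
    have h1 := hcQ (0 + QI k)
    have h2 : (∑ i, ((0 + QI k) i) ^ 2) = ∑ i, ((k i : ℝ)) ^ 2 := by
      refine Finset.sum_congr rfl fun i _ => ?_
      simp [QI]
    rw [h2] at h1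
    nlinarith [mul_le_mul_of_nonneg_left h1 (half_pos hs0).le]
  have step2 : (∑' k : Fin n → ℤ, Real.exp (-(s * (c / 2) * ∑ i, ((k i : ℝ)) ^ 2)))
      = (∑' m : ℤ, Real.exp (-(s * (c / 2) * (m : ℝ) ^ 2))) ^ n := tsum_exp_gauss n _ ha
  have hle1 : s * (c / 2) ≤ 1 := by nlinarith
  have step3 : (∑' m : ℤ, Real.exp (-(s * (c / 2) * (m : ℝ) ^ 2))) ≤ 6 / Real.sqrt (s * (c / 2)) :=
    tsum_int_exp_sq_le ha hle1
  have step4 : (6 / Real.sqrt (s * (c / 2))) = (6 / Real.sqrt (c / 2)) * (Real.sqrt s)⁻¹ := by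
    rw [Real.sqrt_mul hs0.le]
    field_simp
  calc thL Gz 0 s ≤ (∑' m : ℤ, Real.exp (-(s * (c / 2) * (m : ℝ) ^ 2))) ^ n := by
        rw [← step2]; exact step1
  _ ≤ (6 / Real.sqrt (s * (c / 2))) ^ n := by
        apply pow_le_pow_left₀ (tsum_nonneg fun m => (Real.exp_pos _).le) step3
  _ = (6 / Real.sqrt (c / 2)) ^ n * ((Real.sqrt s)⁻¹) ^ n := by
        rw [step4, mul_pow]

lemma thL_lower (c : ℝ) (hc : 0 < c)
    (hcQ : ∀ v : Fin n → ℝ, c * (∑ i, (v i) ^ 2) ≤ Br Gz v v)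
    {t : ℝ} (ht0 : 0 < t) (ht1 : t ≤ 1) :
    Real.exp (-(2 * (∑ i, ∑ j, |(Gz i j : ℝ)|))) * ((Real.sqrt t)⁻¹) ^ n ≤ thL Gz 0 t := by
  set Λ : ℝ := ∑ i, ∑ j, |(Gz i j : ℝ)| with hΛdef
  have hΛ0 : 0 ≤ Λ := Finset.sum_nonneg fun i _ => Finset.sum_nonneg fun j _ => abs_nonneg _
  have hst : 0 < Real.sqrt t := Real.sqrt_pos.mpr ht0
  set x : ℝ := (Real.sqrt t)⁻¹ with hxdef
  have hx0 : 0 < x := inv_pos.mpr hst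
  have hx1 : 1 ≤ x := by
    rw [hxdef, le_inv_comm₀ one_pos hst, inv_one]
    exact Real.sqrt_le_one.mpr ht1
  have hxsq : x ^ 2 = t⁻¹ := by
    rw [hxdef, inv_pow, Real.sq_sqrt ht0.le]
  set M : ℕ := Nat.ceil x with hMdef
  have hMx : x ≤ (M : ℝ) := Nat.le_ceil x
  have hM2x : (M : ℝ) ≤ 2 * x := by
    have h := Nat.ceil_lt_add_one hx0.le
    have : ((M : ℕ) : ℝ) < x + 1 := h
    linarith
  have htM : t * (M : ℝ) ^ 2 ≤ 4 := by
    have h1 : (M : ℝ) ^ 2 ≤ 4 * x ^ 2 := by nlinarith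
    calc t * (M : ℝ) ^ 2 ≤ t * (4 * x ^ 2) := by
          apply mul_le_mul_of_nonneg_left h1 ht0.le
    _ = 4 * (t * t⁻¹) := by rw [hxsq]; ring
    _ = 4 := by rw [mul_inv_cancel₀ ht0.ne']; norm_num
  set box : Finset (Fin n → ℤ) := Fintype.piFinset (fun _ => Finset.Icc (-(M : ℤ)) (M : ℤ))
    with hbox
  have hmem : ∀ k ∈ box, ∀ i, |((k i : ℝ))| ≤ (M : ℝ) := by
    intro k hk i
    have := Fintype.mem_piFinset.mp hk i
    rw [Finset.mem_Icc] at this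
    rw [abs_le]
    constructor <;> [exact_mod_cast this.1; exact_mod_cast this.2]
  have hterm : ∀ k ∈ box, Real.exp (-(2 * Λ)) ≤
      Real.exp (-(t * Br Gz (0 + QI k) (0 + QI k) / 2)) := by
    intro k hk
    apply Real.exp_le_exp.2
    have hBr : Br Gz (0 + QI k) (0 + QI k) ≤ (M : ℝ) ^ 2 * Λ := by
      have h0 : (0 : Fin n → ℝ) + QI k = QI k := zero_add _
      rw [h0]
      exact Br_box_bound Gz (M : ℝ) (Nat.cast_nonneg M) (QI k) (hmem k hk)
    have hBr0 : 0 ≤ Br Gz (0 + QI k) (0 + QI k) := thL_zero_nonneg_term Gz c hc hcQ _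
    have : t * Br Gz (0 + QI k) (0 + QI k) ≤ 4 * Λ := by
      calc t * Br Gz (0 + QI k) (0 + QI k) ≤ t * ((M : ℝ) ^ 2 * Λ) :=
            mul_le_mul_of_nonneg_left hBr ht0.le
      _ = (t * (M : ℝ) ^ 2) * Λ := by ring
      _ ≤ 4 * Λ := mul_le_mul_of_nonneg_right htM hΛ0
    linarith
  have hcard : (box.card : ℝ) = ((2 * M + 1 : ℕ) : ℝ) ^ n := by
    rw [hbox, Fintype.card_piFinset]
    have h1 : ∀ i : Fin n, (Finset.Icc (-(M : ℤ)) (M : ℤ)).card = 2 * M + 1 := by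
      intro i
      rw [Int.card_Icc]
      have : ((M : ℤ) + 1 - -(M : ℤ)) = ((2 * M + 1 : ℕ) : ℤ) := by push_cast; ring
      rw [this, Int.toNat_natCast]
    rw [Finset.prod_congr rfl (fun i _ => h1 i), Finset.prod_const]
    simp
  have hsum : (box.card : ℝ) * Real.exp (-(2 * Λ)) ≤ thL Gz 0 t := by
    have h1 := Finset.card_nsmul_le_sum box
      (fun k => Real.exp (-(t * Br Gz (0 + QI k) (0 + QI k) / 2))) _ hterm
    rw [nsmul_eq_mul] at h1
    calc (box.card : ℝ) * Real.exp (-(2 * Λ)) ≤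
          ∑ k ∈ box, Real.exp (-(t * Br Gz (0 + QI k) (0 + QI k) / 2)) := h1
    _ ≤ thL Gz 0 t := Summable.sum_le_tsum box (fun k _ => (Real.exp_pos _).le)
          (thL_summable Gz c hc hcQ 0 ht0)
  calc Real.exp (-(2 * Λ)) * x ^ n ≤ Real.exp (-(2 * Λ)) * (M : ℝ) ^ n := by
        apply mul_le_mul_of_nonneg_left (pow_le_pow_left₀ hx0.le hMx n) (Real.exp_pos _).le
  _ ≤ Real.exp (-(2 * Λ)) * ((2 * M + 1 : ℕ) : ℝ) ^ n := by
        apply mul_le_mul_of_nonneg_left ?_ (Real.exp_pos _).le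
        apply pow_le_pow_left₀ (Nat.cast_nonneg M)
        exact_mod_cast Nat.le_of_lt (by omega)
  _ = (box.card : ℝ) * Real.exp (-(2 * Λ)) := by rw [hcard]; ring
  _ ≤ thL Gz 0 t := hsum

lemma exp_shrink {y ε : ℝ} (hy : 0 ≤ y) (hε0 : 0 < ε) (hε2 : ε ≤ 1/2) :
    Real.exp (-((1 - ε) * y)) ≤ Real.exp (-y) + 2 * ε * Real.exp (-(y / 4)) := by
  have h1 : Real.exp (-((1 - ε) * y)) - Real.exp (-y)
      = Real.exp (-((1 - ε) * y)) * (1 - Real.exp (-(ε * y))) := by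
    rw [mul_sub, mul_one, ← Real.exp_add]
    ring_nf
  have h2 : 1 - Real.exp (-(ε * y)) ≤ ε * y := by
    have := Real.add_one_le_exp (-(ε * y))
    linarith
  have h2' : 0 ≤ 1 - Real.exp (-(ε * y)) := by
    have h := Real.exp_le_one_iff.mpr (by nlinarith : -(ε * y) ≤ 0)
    linarith
  have h3 : Real.exp (-((1 - ε) * y)) ≤ Real.exp (-(y / 2)) :=
    Real.exp_le_exp.2 (by nlinarith)
  have h4 : (y / 4) * Real.exp (-(y / 4)) ≤ Real.exp (-1 : ℝ) := by
    calc (y / 4) * Real.exp (-(y / 4)) ≤ Real.exp (y / 4 - 1) * Real.exp (-(y / 4)) := by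
          apply mul_le_mul_of_nonneg_right ?_ (Real.exp_pos _).le
          have := Real.add_one_le_exp (y / 4 - 1)
          linarith
    _ = Real.exp (-1 : ℝ) := by rw [← Real.exp_add]; ring_nf
  have h5 : Real.exp (-1 : ℝ) ≤ 1/2 := exp_neg_one_le_half
  have h6 : Real.exp (-((1 - ε) * y)) - Real.exp (-y) ≤ Real.exp (-(y / 2)) * (ε * y) := by
    rw [h1]
    exact mul_le_mul h3 h2 h2' (Real.exp_pos _).le
  have h7 : Real.exp (-(y / 2)) * (ε * y) = 4 * ε * ((y / 4) * Real.exp (-(y / 4))) *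
      Real.exp (-(y / 4)) := by
    rw [show -(y/2) = -(y/4) + -(y/4) by ring, Real.exp_add]
    ring
  have h8 : Real.exp (-(y / 2)) * (ε * y) ≤ 2 * ε * Real.exp (-(y / 4)) := by
    rw [h7]
    calc 4 * ε * ((y / 4) * Real.exp (-(y / 4))) * Real.exp (-(y / 4))
        ≤ 4 * ε * (1/2) * Real.exp (-(y / 4)) := by
          apply mul_le_mul_of_nonneg_right ?_ (Real.exp_pos _).le
          apply mul_le_mul_of_nonneg_left (h4.trans h5) (by positivity)
    _ = 2 * ε * Real.exp (-(y / 4)) := by ring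
  linarith

lemma exp_avg (A B : ℝ) : 2 * Real.exp (-((A + B) / 2)) ≤ Real.exp (-A) + Real.exp (-B) := by
  set z := (B - A) / 2 with hz
  have hA : Real.exp (-A) = Real.exp (-((A + B) / 2)) * Real.exp z := by
    rw [← Real.exp_add]; congr 1; rw [hz]; ring
  have hB : Real.exp (-B) = Real.exp (-((A + B) / 2)) * Real.exp (-z) := by
    rw [← Real.exp_add]; congr 1; rw [hz]; ring
  have h1 := Real.add_one_le_exp z
  have h2 := Real.add_one_le_exp (-z)
  have h3 : 2 ≤ Real.exp z + Real.exp (-z) := by linarith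
  rw [hA, hB, ← mul_add]
  nlinarith [Real.exp_pos (-((A + B) / 2))]

lemma Br_shift_lower (hsym : ∀ i j, Gz i j = Gz j i)
    (hpsd : ∀ u : Fin n → ℝ, 0 ≤ Br Gz u u) (l u : Fin n → ℝ) {ε : ℝ} (hε : 0 < ε) :
    (1 - ε) * Br Gz u u - (ε⁻¹ - 1) * Br Gz l l ≤ Br Gz (l + u) (l + u) := by
  have h := hpsd (ε • u + l)
  rw [Br_expand Gz hsym, Br_sq_smul, Br_smul_left] at h
  have hsymm : Br Gz u l = Br Gz l u := Br_symm Gz hsym u l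
  have hexp : Br Gz (l + u) (l + u) = Br Gz l l + 2 * Br Gz l u + Br Gz u u :=
    Br_expand Gz hsym l u
  have h2 : 0 ≤ ε⁻¹ * (ε ^ 2 * Br Gz u u + 2 * (ε * Br Gz u l) + Br Gz l l) :=
    mul_nonneg (inv_pos.mpr hε).le h
  have h3 : ε⁻¹ * (ε ^ 2 * Br Gz u u + 2 * (ε * Br Gz u l) + Br Gz l l)
      = ε * Br Gz u u + 2 * Br Gz u l + ε⁻¹ * Br Gz l l := by
    field_simp
  rw [h3] at h2
  rw [hexp]
  linarith [hsymm ▸ h2]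

lemma Br_parallelogram (hsym : ∀ i j, Gz i j = Gz j i) (l u : Fin n → ℝ) :
    Br Gz (l + u) (l + u) + Br Gz (l - u) (l - u) = 2 * Br Gz l l + 2 * Br Gz u u := by
  rw [Br_expand Gz hsym, Br_expand_sub Gz hsym]
  ring

lemma thL_shift_lower (hsym : ∀ i j, Gz i j = Gz j i) (c : ℝ) (hc : 0 < c)
    (hcQ : ∀ v : Fin n → ℝ, c * (∑ i, (v i) ^ 2) ≤ Br Gz v v)
    (l : Fin n → ℝ) {t : ℝ} (ht : 0 < t) :
    Real.exp (-(t * Br Gz l l / 2)) * thL Gz 0 t ≤ thL Gz l t := by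
  set f : (Fin n → ℤ) → ℝ := fun k => Real.exp (-(t * Br Gz (l + QI k) (l + QI k) / 2)) with hf
  have hfs : Summable f := thL_summable Gz c hc hcQ l ht
  have hfnegs : Summable (fun k => f (-k)) := ((Equiv.neg (Fin n → ℤ)).summable_iff).mpr hfs
  have hnegsum : ∑' k, f (-k) = ∑' k, f k := by
    have := (Equiv.neg (Fin n → ℤ)).tsum_eq f
    simpa using this
  have hterm : ∀ k : Fin n → ℤ, Real.exp (-(t * Br Gz l l / 2)) *
      Real.exp (-(t * Br Gz (0 + QI k) (0 + QI k) / 2)) ≤ (f k + f (-k)) / 2 := by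
    intro k
    have hQIneg : l + QI (-k) = l - QI k := by
      rw [QI_neg, sub_eq_add_neg]
    have hfneg : f (-k) = Real.exp (-(t * Br Gz (l - QI k) (l - QI k) / 2)) := by
      rw [hf]; simp only []; rw [hQIneg]
    set A := t * Br Gz (l + QI k) (l + QI k) / 2 with hA
    set B := t * Br Gz (l - QI k) (l - QI k) / 2 with hB
    have havg := exp_avg A B
    have hAB : (A + B) / 2 = t * Br Gz l l / 2 + t * Br Gz (QI k) (QI k) / 2 := by
      rw [hA, hB]
      have := Br_parallelogram Gz hsym l (QI k)
      field_simp
      nlinarith [this]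
    have h0 : (0 : Fin n → ℝ) + QI k = QI k := zero_add _
    have hfk : f k = Real.exp (-A) := by rw [hA]
    have hfnegk : f (-k) = Real.exp (-B) := by
      rw [hB, hf]
      show Real.exp (-(t * Br Gz (l + QI (-k)) (l + QI (-k)) / 2)) = _
      rw [hQIneg]
    rw [h0, ← Real.exp_add, hfk, hfnegk]
    have heq : -(t * Br Gz l l / 2) + -(t * Br Gz (QI k) (QI k) / 2) = -((A + B) / 2) := by
      rw [hAB]; ring
    rw [heq]
    linarith [havg]
  have hsplit : thL Gz l t = ∑' k, (f k + f (-k)) / 2 := by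
    rw [thL]
    have h1 : ∑' k, (f k + f (-k)) / 2 = (∑' k, f k + ∑' k, f (-k)) / 2 := by
      rw [← Summable.tsum_add hfs hfnegs, tsum_div_const]
    rw [h1, hnegsum]
    rw [hf]
    ring
  rw [hsplit]
  have hsum2 : Summable (fun k => (f k + f (-k)) / 2) := by
    apply Summable.div_const
    exact hfs.add hfnegs
  calc Real.exp (-(t * Br Gz l l / 2)) * thL Gz 0 t
      = ∑' k : Fin n → ℤ, Real.exp (-(t * Br Gz l l / 2)) *
          Real.exp (-(t * Br Gz (0 + QI k) (0 + QI k) / 2)) := by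
        rw [thL, tsum_mul_left]
  _ ≤ ∑' k, (f k + f (-k)) / 2 := by
        apply Summable.tsum_le_tsum hterm ?_ hsum2
        exact (thL_summable Gz c hc hcQ 0 ht).mul_left _

lemma thL_shift_upper (hsym : ∀ i j, Gz i j = Gz j i) (c : ℝ) (hc : 0 < c)
    (hcQ : ∀ v : Fin n → ℝ, c * (∑ i, (v i) ^ 2) ≤ Br Gz v v)
    (l : Fin n → ℝ) {t ε : ℝ} (ht : 0 < t) (hε0 : 0 < ε) (hε1 : ε < 1) :
    thL Gz l t ≤ Real.exp (t * ((ε⁻¹ - 1) * Br Gz l l / 2)) * thL Gz 0 ((1 - ε) * t) := by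
  have hpsd : ∀ u : Fin n → ℝ, 0 ≤ Br Gz u u := thL_zero_nonneg_term Gz c hc hcQ
  have ht2 : 0 < (1 - ε) * t := mul_pos (by linarith) ht
  have hterm : ∀ k : Fin n → ℤ, Real.exp (-(t * Br Gz (l + QI k) (l + QI k) / 2))
      ≤ Real.exp (t * ((ε⁻¹ - 1) * Br Gz l l / 2)) *
        Real.exp (-((1 - ε) * t * Br Gz (0 + QI k) (0 + QI k) / 2)) := by
    intro k
    rw [← Real.exp_add]
    apply Real.exp_le_exp.2
    have h1 := Br_shift_lower Gz hsym hpsd l (QI k) hε0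
    have h0 : (0 : Fin n → ℝ) + QI k = QI k := zero_add _
    rw [h0]
    nlinarith [mul_le_mul_of_nonneg_left h1 (half_pos ht).le]
  calc thL Gz l t ≤ ∑' k : Fin n → ℤ, Real.exp (t * ((ε⁻¹ - 1) * Br Gz l l / 2)) *
        Real.exp (-((1 - ε) * t * Br Gz (0 + QI k) (0 + QI k) / 2)) := by
        apply Summable.tsum_le_tsum hterm (thL_summable Gz c hc hcQ l ht)
        exact (thL_summable Gz c hc hcQ 0 ht2).mul_left _
  _ = Real.exp (t * ((ε⁻¹ - 1) * Br Gz l l / 2)) * thL Gz 0 ((1 - ε) * t) := by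
        rw [thL, tsum_mul_left]

lemma thL_ratio (c : ℝ) (hc : 0 < c) (hc2 : c ≤ 2)
    (hcQ : ∀ v : Fin n → ℝ, c * (∑ i, (v i) ^ 2) ≤ Br Gz v v)
    {t ε : ℝ} (ht0 : 0 < t) (ht1 : t ≤ 1) (hε0 : 0 < ε) (hε2 : ε ≤ 1/2) :
    thL Gz 0 ((1 - ε) * t) ≤
      (1 + 2 * ε * ((6 / Real.sqrt (c / 2)) ^ n * 2 ^ n *
        Real.exp (2 * (∑ i, ∑ j, |(Gz i j : ℝ)|)))) * thL Gz 0 t := by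
  set Λ : ℝ := ∑ i, ∑ j, |(Gz i j : ℝ)| with hΛdef
  set A : ℝ := (6 / Real.sqrt (c / 2)) ^ n with hAdef
  set K : ℝ := A * 2 ^ n * Real.exp (2 * Λ) with hKdef
  have hΛ0 : 0 ≤ Λ := Finset.sum_nonneg fun i _ => Finset.sum_nonneg fun j _ => abs_nonneg _
  have ht2 : 0 < (1 - ε) * t := mul_pos (by linarith) ht0
  have ht4 : 0 < t / 4 := by linarith
  -- step 1 : termwise shrink
  have h1 : thL Gz 0 ((1 - ε) * t) ≤ thL Gz 0 t + 2 * ε * thL Gz 0 (t / 4) := by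
    have hterm : ∀ k : Fin n → ℤ,
        Real.exp (-((1 - ε) * t * Br Gz (0 + QI k) (0 + QI k) / 2))
        ≤ Real.exp (-(t * Br Gz (0 + QI k) (0 + QI k) / 2))
          + 2 * ε * Real.exp (-(t / 4 * Br Gz (0 + QI k) (0 + QI k) / 2)) := by
      intro k
      set y := t * Br Gz (0 + QI k) (0 + QI k) / 2 with hy
      have hy0 : 0 ≤ y := by
        rw [hy]
        have := thL_zero_nonneg_term Gz c hc hcQ (0 + QI k)
        positivity
      have h := exp_shrink hy0 hε0 hε2
      have e1 : -((1 - ε) * t * Br Gz (0 + QI k) (0 + QI k) / 2) = -((1 - ε) * y) := by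
        rw [hy]; ring
      have e2 : -(t / 4 * Br Gz (0 + QI k) (0 + QI k) / 2) = -(y / 4) := by
        rw [hy]; ring
      rw [e1, e2]
      exact h
    have hs1 := thL_summable Gz c hc hcQ 0 ht2
    have hs2 := thL_summable Gz c hc hcQ 0 ht0
    have hs3 := thL_summable Gz c hc hcQ 0 ht4
    calc thL Gz 0 ((1 - ε) * t)
        ≤ ∑' k : Fin n → ℤ, (Real.exp (-(t * Br Gz (0 + QI k) (0 + QI k) / 2))
          + 2 * ε * Real.exp (-(t / 4 * Br Gz (0 + QI k) (0 + QI k) / 2))) := by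
          apply Summable.tsum_le_tsum hterm hs1
          exact hs2.add (hs3.mul_left _)
    _ = thL Gz 0 t + 2 * ε * thL Gz 0 (t / 4) := by
          rw [Summable.tsum_add hs2 (hs3.mul_left _), tsum_mul_left, thL, thL]
  -- step 2 : thL Gz 0 (t/4) ≤ K * thL Gz 0 t
  have h2 : thL Gz 0 (t / 4) ≤ K * thL Gz 0 t := by
    have hup := thL_upper Gz c hc hc2 hcQ ht4 (by linarith)
    have hlo := thL_lower Gz c hc hcQ ht0 ht1
    have hst : 0 < Real.sqrt t := Real.sqrt_pos.mpr ht0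
    have hsqrt4 : Real.sqrt (t / 4) = Real.sqrt t * (1/2) := by
      rw [show t / 4 = t * (1/4) by ring, Real.sqrt_mul ht0.le,
        show (1/4 : ℝ) = (1/2)^2 by norm_num, Real.sqrt_sq (by norm_num : (0:ℝ) ≤ 1/2)]
    have hinv : (Real.sqrt (t/4))⁻¹ = 2 * (Real.sqrt t)⁻¹ := by
      rw [hsqrt4, mul_inv, show ((1:ℝ)/2)⁻¹ = 2 by norm_num]
      ring
    have hxn : ((Real.sqrt (t/4))⁻¹) ^ n = 2 ^ n * ((Real.sqrt t)⁻¹) ^ n := by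
      rw [hinv, mul_pow]
    have hx_le : ((Real.sqrt t)⁻¹) ^ n ≤ Real.exp (2 * Λ) * thL Gz 0 t := by
      calc ((Real.sqrt t)⁻¹) ^ n
          = Real.exp (2 * Λ) * (Real.exp (-(2 * Λ)) * ((Real.sqrt t)⁻¹) ^ n) := by
            rw [← mul_assoc, ← Real.exp_add]
            simp
      _ ≤ Real.exp (2 * Λ) * thL Gz 0 t :=
            mul_le_mul_of_nonneg_left hlo (Real.exp_pos _).le
    have hA0 : 0 ≤ A := by rw [hAdef]; positivity
    calc thL Gz 0 (t/4) ≤ A * ((Real.sqrt (t/4))⁻¹) ^ n := hup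
    _ = A * 2 ^ n * ((Real.sqrt t)⁻¹) ^ n := by rw [hxn]; ring
    _ ≤ A * 2 ^ n * (Real.exp (2 * Λ) * thL Gz 0 t) := by
          apply mul_le_mul_of_nonneg_left hx_le (by positivity)
    _ = K * thL Gz 0 t := by rw [hKdef]; ring
  calc thL Gz 0 ((1 - ε) * t) ≤ thL Gz 0 t + 2 * ε * thL Gz 0 (t / 4) := h1
  _ ≤ thL Gz 0 t + 2 * ε * (K * thL Gz 0 t) := by
        have hthpos : 0 ≤ thL Gz 0 (t/4) := tsum_nonneg fun k => (Real.exp_pos _).le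
        have := mul_le_mul_of_nonneg_left h2 (by positivity : (0:ℝ) ≤ 2 * ε)
        linarith
  _ = (1 + 2 * ε * K) * thL Gz 0 t := by ring

end Theta

section Main

variable {n : ℕ}

theorem coordMain (Gz : Matrix (Fin n) (Fin n) ℤ)
    (hsym : ∀ i j, Gz i j = Gz j i)
    (hpos : ∀ k : Fin n → ℤ, k ≠ 0 → 0 < Br Gz (QI k) (QI k))
    (l : Fin n → ℝ) :
    (∀ q ∈ Set.Ioo (0:ℝ) 1,
      Summable fun k : Fin n → ℤ => q ^ (Br Gz (l + QI k) (l + QI k) / 2)) ∧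
    Filter.Tendsto (fun q : ℝ =>
        (∑' k : Fin n → ℤ, q ^ (Br Gz (l + QI k) (l + QI k) / 2)) /
        (∑' k : Fin n → ℤ, q ^ (Br Gz (QI k) (QI k) / 2)))
      (nhdsWithin 1 (Set.Iio 1)) (nhds 1) := by
  obtain ⟨c, hc, hc2, hcQ⟩ := exists_posdef_lower Gz hsym hpos
  have hrpow : ∀ q : ℝ, 0 < q → ∀ x : ℝ, q ^ x = Real.exp (-((-Real.log q) * x)) := by
    intro q hq x
    rw [Real.rpow_def_of_pos hq]
    congr 1
    ring
  -- summability part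
  have hsummable : ∀ q ∈ Set.Ioo (0:ℝ) 1, ∀ l' : Fin n → ℝ,
      Summable fun k : Fin n → ℤ => q ^ (Br Gz (l' + QI k) (l' + QI k) / 2) := by
    intro q hq l'
    have ht : 0 < -Real.log q := by
      have := Real.log_neg hq.1 hq.2
      linarith
    have := thL_summable Gz c hc hcQ l' ht
    refine this.congr fun k => ?_
    rw [hrpow q hq.1]
    congr 1
    ring
  refine ⟨fun q hq => hsummable q hq l, ?_⟩
  -- limit part
  set Λ : ℝ := ∑ i, ∑ j, |(Gz i j : ℝ)| with hΛdef
  set K : ℝ := (6 / Real.sqrt (c / 2)) ^ n * 2 ^ n * Real.exp (2 * Λ) with hKdef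
  have hsc : 0 < Real.sqrt (c / 2) := Real.sqrt_pos.mpr (by linarith)
  have hK0 : 0 < K := by
    apply mul_pos (mul_pos (pow_pos (by positivity) n) (pow_pos two_pos n)) (Real.exp_pos _)
  have hE : Set.Ioo (Real.exp (-1:ℝ)) 1 ∈ nhdsWithin (1:ℝ) (Set.Iio 1) :=
    Ioo_mem_nhdsLT (by rw [Real.exp_lt_one_iff]; norm_num)
  -- basic facts for q in the window
  have hwin : ∀ q ∈ Set.Ioo (Real.exp (-1:ℝ)) 1,
      0 < q ∧ 0 < -Real.log q ∧ -Real.log q ≤ 1 := by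
    intro q hq
    have hq0 : 0 < q := lt_trans (Real.exp_pos _) hq.1
    have hlt : Real.log q < 0 := Real.log_neg hq0 hq.2
    have hgt : (-1:ℝ) < Real.log q := by
      rw [← Real.log_exp (-1:ℝ)]
      exact Real.log_lt_log (Real.exp_pos _) hq.1
    exact ⟨hq0, by linarith, by linarith⟩
  -- identification of numerator and denominator
  have hnum : ∀ q ∈ Set.Ioo (Real.exp (-1:ℝ)) 1, ∀ l' : Fin n → ℝ,
      (∑' k : Fin n → ℤ, q ^ (Br Gz (l' + QI k) (l' + QI k) / 2)) = thL Gz l' (-Real.log q) := by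
    intro q hq l'
    obtain ⟨hq0, ht0, ht1⟩ := hwin q hq
    rw [thL]
    refine tsum_congr fun k => ?_
    rw [hrpow q hq0]
    congr 1
    ring
  have hden : ∀ q ∈ Set.Ioo (Real.exp (-1:ℝ)) 1,
      (∑' k : Fin n → ℤ, q ^ (Br Gz (QI k) (QI k) / 2)) = thL Gz 0 (-Real.log q) := by
    intro q hq
    obtain ⟨hq0, ht0, ht1⟩ := hwin q hq
    rw [thL]
    refine tsum_congr fun k => ?_
    rw [hrpow q hq0, zero_add]
    congr 1
    ring
  have hdenpos : ∀ q ∈ Set.Ioo (Real.exp (-1:ℝ)) 1, 0 < thL Gz 0 (-Real.log q) := by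
    intro q hq
    obtain ⟨hq0, ht0, ht1⟩ := hwin q hq
    refine lt_of_lt_of_le ?_ (thL_lower Gz c hc hcQ ht0 ht1)
    have : 0 < Real.sqrt (-Real.log q) := Real.sqrt_pos.mpr ht0
    positivity
  rw [tendsto_order]
  constructor
  · -- lower bound side
    intro a ha
    have h1 : Filter.Tendsto (fun q : ℝ => q ^ (Br Gz l l / 2))
        (nhdsWithin 1 (Set.Iio 1)) (nhds 1) := by
      have hcont := (Real.continuousAt_rpow_const 1 (Br Gz l l / 2) (Or.inl one_ne_zero)).tendsto
      rw [Real.one_rpow] at hcont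
      exact hcont.mono_left nhdsWithin_le_nhds
    filter_upwards [h1.eventually (eventually_gt_nhds ha), hE] with q hqa hqE
    obtain ⟨hq0, ht0, ht1⟩ := hwin q hqE
    have hlow := thL_shift_lower Gz hsym c hc hcQ l ht0
    have hexp_eq : Real.exp (-((-Real.log q) * (Br Gz l l / 2))) = q ^ (Br Gz l l / 2) :=
      (hrpow q hq0 _).symm
    have hexp_eq2 : Real.exp (-((-Real.log q) * Br Gz l l / 2)) = q ^ (Br Gz l l / 2) := by
      rw [← hexp_eq]
      congr 1
      ring
    calc a < q ^ (Br Gz l l / 2) := hqa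
    _ ≤ (∑' k : Fin n → ℤ, q ^ (Br Gz (l + QI k) (l + QI k) / 2)) /
        (∑' k : Fin n → ℤ, q ^ (Br Gz (QI k) (QI k) / 2)) := by
        rw [hnum q hqE l, hden q hqE]
        rw [le_div_iff₀ (hdenpos q hqE)]
        rw [← hexp_eq2]
        exact hlow
  · -- upper bound side
    intro b hb
    set ε : ℝ := min (1/2) ((b - 1) / (2 * (2 * K + 1))) with hεdef
    have hden2 : (0:ℝ) < 2 * (2 * K + 1) := by nlinarith
    have hε0 : 0 < ε := lt_min (by norm_num) (div_pos (by linarith) hden2)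
    have hε2 : ε ≤ 1/2 := min_le_left _ _
    have hε1 : ε < 1 := lt_of_le_of_lt hε2 (by norm_num)
    have h1b : 1 + 2 * ε * K < b := by
      have hX : ε ≤ (b - 1) / (2 * (2 * K + 1)) := min_le_right _ _
      have h2 : 2 * ε * K ≤ 2 * ((b - 1) / (2 * (2 * K + 1))) * K := by
        apply mul_le_mul_of_nonneg_right ?_ hK0.le
        linarith
      have h3 : 2 * ((b - 1) / (2 * (2 * K + 1))) * K = (b - 1) * (2 * K / (2 * (2 * K + 1))) := by
        ring
      have h4 : 2 * K / (2 * (2 * K + 1)) < 1 := (div_lt_one hden2).mpr (by linarith)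
      have h5 : (b - 1) * (2 * K / (2 * (2 * K + 1))) < (b - 1) * 1 := by
        apply mul_lt_mul_of_pos_left h4 (by linarith)
      rw [h3] at h2
      linarith
    have h1 : Filter.Tendsto (fun q : ℝ => q ^ (-((ε⁻¹ - 1) * Br Gz l l / 2)) * (1 + 2 * ε * K))
        (nhdsWithin 1 (Set.Iio 1)) (nhds (1 + 2 * ε * K)) := by
      have hcont := (Real.continuousAt_rpow_const 1 (-((ε⁻¹ - 1) * Br Gz l l / 2))
        (Or.inl one_ne_zero)).tendsto
      rw [Real.one_rpow] at hcont
      have := (hcont.mono_left (nhdsWithin_le_nhds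
        (s := Set.Iio (1:ℝ)))).mul_const (1 + 2 * ε * K)
      rw [one_mul] at this
      exact this
    filter_upwards [h1.eventually_lt_const h1b, hE] with q hqb hqE
    obtain ⟨hq0, ht0, ht1⟩ := hwin q hqE
    refine lt_of_le_of_lt ?_ hqb
    have hupper := thL_shift_upper Gz hsym c hc hcQ l ht0 hε0 hε1
    have hratio := thL_ratio Gz c hc hc2 hcQ ht0 ht1 hε0 hε2
    have hexp_eq : Real.exp ((-Real.log q) * ((ε⁻¹ - 1) * Br Gz l l / 2))
        = q ^ (-((ε⁻¹ - 1) * Br Gz l l / 2)) := by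
      rw [hrpow q hq0]
      congr 1
      ring
    rw [hnum q hqE l, hden q hqE]
    rw [div_le_iff₀ (hdenpos q hqE)]
    calc thL Gz l (-Real.log q)
        ≤ Real.exp ((-Real.log q) * ((ε⁻¹ - 1) * Br Gz l l / 2)) *
          thL Gz 0 ((1 - ε) * (-Real.log q)) := hupper
    _ ≤ Real.exp ((-Real.log q) * ((ε⁻¹ - 1) * Br Gz l l / 2)) *
          ((1 + 2 * ε * K) * thL Gz 0 (-Real.log q)) := by
          apply mul_le_mul_of_nonneg_left ?_ (Real.exp_pos _).le
          rw [hKdef] at *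
          exact hratio
    _ = q ^ (-((ε⁻¹ - 1) * Br Gz l l / 2)) * (1 + 2 * ε * K) * thL Gz 0 (-Real.log q) := by
          rw [hexp_eq]
          ring

end Main

end ThetaAux

open scoped TensorProduct

/-- For a positive-definite lattice `L` with form extended ℝ-bilinearly to
`L ⊗ ℝ` and `λ ∈ L ⊗ ℝ`, the theta series `θ_{λ+L}(q) = Σ_{α∈L} q^((λ+α|λ+α)/2)`
converges for `q ∈ (0,1)`, and `lim_{q→1⁻} θ_{λ+L}(q)/θ_L(q) = 1`. -/
theorem stmt_6 (L : Type*) [AddCommGroup L] [Module.Free ℤ L] [Module.Finite ℤ L]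
    (B : L → L → ℤ)
    (haddl : ∀ x x' y : L, B (x + x') y = B x y + B x' y)
    (haddr : ∀ x y y' : L, B x (y + y') = B x y + B x y')
    (hsymm : ∀ x y : L, B x y = B y x)
    (hpos : ∀ x : L, x ≠ 0 → 0 < B x x)
    (BR : (ℝ ⊗[ℤ] L) →ₗ[ℝ] (ℝ ⊗[ℤ] L) →ₗ[ℝ] ℝ)
    (hBRsymm : ∀ v w : ℝ ⊗[ℤ] L, BR v w = BR w v)
    (hBR : ∀ x y : L, BR ((1 : ℝ) ⊗ₜ[ℤ] x) ((1 : ℝ) ⊗ₜ[ℤ] y) = (B x y : ℝ))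
    (lam : ℝ ⊗[ℤ] L) :
    (∀ q ∈ Set.Ioo (0 : ℝ) 1,
      Summable fun α : L =>
        q ^ (BR (lam + (1 : ℝ) ⊗ₜ[ℤ] α) (lam + (1 : ℝ) ⊗ₜ[ℤ] α) / 2)) ∧
    Filter.Tendsto
      (fun q : ℝ =>
        (∑' α : L, q ^ (BR (lam + (1 : ℝ) ⊗ₜ[ℤ] α) (lam + (1 : ℝ) ⊗ₜ[ℤ] α) / 2)) /
        (∑' α : L, q ^ ((B α α : ℝ) / 2)))
      (nhdsWithin 1 (Set.Iio 1)) (nhds 1) := by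
  classical
  set n : ℕ := Fintype.card (Module.Free.ChooseBasisIndex ℤ L) with hn
  set b : Module.Basis (Fin n) ℤ L :=
    (Module.Free.chooseBasis ℤ L).reindex (Fintype.equivFin _) with hb
  set e : L ≃ (Fin n → ℤ) := b.equivFun.toEquiv with he
  set bR : Module.Basis (Fin n) ℝ (ℝ ⊗[ℤ] L) := b.baseChange ℝ with hbR
  set ψ : (Fin n → ℝ) → ℝ ⊗[ℤ] L := fun v => ∑ i, v i • ((1:ℝ) ⊗ₜ[ℤ] b i) with hψdef
  set Gz : Matrix (Fin n) (Fin n) ℤ := Matrix.of (fun i j => B (b i) (b j)) with hGz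
  have hGzapp : ∀ i j, Gz i j = B (b i) (b j) := fun i j => rfl
  -- (1) BR on ψ's equals Br Gz
  have hψBR : ∀ v w : Fin n → ℝ, BR (ψ v) (ψ w) = ThetaAux.Br Gz v w := by
    intro v w
    have step1 : ∀ x : ℝ ⊗[ℤ] L, BR (ψ v) x = ∑ i, v i * BR ((1:ℝ) ⊗ₜ[ℤ] b i) x := by
      intro x
      rw [hψdef]
      simp only []
      rw [map_sum, LinearMap.sum_apply]
      refine Finset.sum_congr rfl fun i _ => ?_
      rw [map_smul, LinearMap.smul_apply, smul_eq_mul]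
    have step2 : ∀ i : Fin n, BR ((1:ℝ) ⊗ₜ[ℤ] b i) (ψ w)
        = ∑ j, w j * BR ((1:ℝ) ⊗ₜ[ℤ] b i) ((1:ℝ) ⊗ₜ[ℤ] b j) := by
      intro i
      rw [hψdef]
      simp only []
      rw [map_sum]
      refine Finset.sum_congr rfl fun j _ => ?_
      rw [map_smul, smul_eq_mul]
    rw [step1]
    unfold ThetaAux.Br
    refine Finset.sum_congr rfl fun i _ => ?_
    rw [step2 i, Finset.mul_sum]
    refine Finset.sum_congr rfl fun j _ => ?_
    rw [hBR, hGzapp]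
    ring
  -- (2) pure tensors as ψ of integer vectors
  have htensor : ∀ α : L, (1 : ℝ) ⊗ₜ[ℤ] α = ψ (ThetaAux.QI (e α)) := by
    intro α
    have hα : (∑ i, b.equivFun α i • b i) = α := b.sum_equivFun α
    conv_lhs => rw [← hα]
    rw [TensorProduct.tmul_sum]
    rw [hψdef]
    refine Finset.sum_congr rfl fun i _ => ?_
    rw [TensorProduct.tmul_smul]
    rw [← Int.cast_smul_eq_zsmul ℝ]
    rfl
  -- (3) lam as ψ
  set lvec : Fin n → ℝ := bR.equivFun lam with hlvec
  have hlam : lam = ψ lvec := by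
    have h1 : (∑ i, bR.equivFun lam i • bR i) = lam := bR.sum_equivFun lam
    rw [← h1, hψdef]
    refine Finset.sum_congr rfl fun i _ => ?_
    rw [hbR, Module.Basis.baseChange_apply]
  -- (4) additivity of ψ
  have hadd : ∀ v w : Fin n → ℝ, ψ v + ψ w = ψ (v + w) := by
    intro v w
    rw [hψdef]
    simp only []
    rw [← Finset.sum_add_distrib]
    refine Finset.sum_congr rfl fun i _ => ?_
    rw [Pi.add_apply, add_smul]
  -- main identities
  have hBmain : ∀ α : L, BR (lam + (1 : ℝ) ⊗ₜ[ℤ] α) (lam + (1 : ℝ) ⊗ₜ[ℤ] α)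
      = ThetaAux.Br Gz (lvec + ThetaAux.QI (e α)) (lvec + ThetaAux.QI (e α)) := by
    intro α
    rw [htensor α]
    nth_rewrite 1 [hlam]
    nth_rewrite 1 [hlam]
    rw [hadd, hψBR]
  have hBdiag : ∀ α : L, ((B α α : ℤ) : ℝ)
      = ThetaAux.Br Gz (ThetaAux.QI (e α)) (ThetaAux.QI (e α)) := by
    intro α
    rw [← hψBR, ← htensor α, hBR]
  -- symmetric
  have hsymGz : ∀ i j, Gz i j = Gz j i := fun i j => by rw [hGzapp, hGzapp, hsymm]
  -- positivity
  have hposGz : ∀ k : Fin n → ℤ, k ≠ 0 →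
      0 < ThetaAux.Br Gz (ThetaAux.QI k) (ThetaAux.QI k) := by
    intro k hk
    have hα : e (e.symm k) = k := e.apply_symm_apply k
    have hαne : e.symm k ≠ 0 := by
      intro h0
      apply hk
      rw [← hα, h0]
      show b.equivFun 0 = 0
      simp
    have := hpos (e.symm k) hαne
    have h2 : (0:ℝ) < ((B (e.symm k) (e.symm k) : ℤ) : ℝ) := by exact_mod_cast this
    rw [hBdiag (e.symm k), hα] at h2
    exact h2
  obtain ⟨hS, hT⟩ := ThetaAux.coordMain Gz hsymGz hposGz lvec
  constructor
  · intro q hq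
    have h1 := hS q hq
    have h2 := (e.summable_iff
      (f := fun k : Fin n → ℤ =>
        q ^ (ThetaAux.Br Gz (lvec + ThetaAux.QI k) (lvec + ThetaAux.QI k) / 2))).mpr h1
    refine h2.congr fun α => ?_
    simp only [Function.comp_apply]
    rw [hBmain α]
  · have hfun : (fun q : ℝ =>
        (∑' α : L, q ^ (BR (lam + (1 : ℝ) ⊗ₜ[ℤ] α) (lam + (1 : ℝ) ⊗ₜ[ℤ] α) / 2)) /
        (∑' α : L, q ^ ((B α α : ℝ) / 2)))
        = (fun q : ℝ =>
        (∑' k : Fin n → ℤ, q ^ (ThetaAux.Br Gz (lvec + ThetaAux.QI k)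
            (lvec + ThetaAux.QI k) / 2)) /
        (∑' k : Fin n → ℤ, q ^ (ThetaAux.Br Gz (ThetaAux.QI k) (ThetaAux.QI k) / 2))) := by
      funext q
      congr 1
      · rw [← e.tsum_eq (fun k : Fin n → ℤ =>
          q ^ (ThetaAux.Br Gz (lvec + ThetaAux.QI k) (lvec + ThetaAux.QI k) / 2))]
        refine tsum_congr fun α => ?_
        rw [hBmain α]
      · rw [← e.tsum_eq (fun k : Fin n → ℤ =>
          q ^ (ThetaAux.Br Gz (ThetaAux.QI k) (ThetaAux.QI k) / 2))]
        refine tsum_congr fun α => ?_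
        rw [hBdiag α]
    rw [hfun]
    exact hT
end

section
/- Let n = 2l be even, let Q = ℤⁿ be the Aₙ root lattice with Cartan form (αᵢ|αⱼ) = 2δ_{ij} − δ_{|i−j|,1}, and let σ be the diagram automorphism σ(αᵢ) = α_{n+1−i}. Then for γ = Σᵢ cᵢαᵢ ∈ Q one has (γ|σγ) ∈ 2ℤ if and only if c_l + c_{l+1} ∈ 2ℤ. Consequently the sublattice Q̄ = {γ ∈ Q : (γ|σγ) ∈ 2ℤ} equals Σ_{i=1}^{l−1} ℤαᵢ + ℤ(α_l + α_{l+1}) + ℤ(α_l − α_{l+1}) + Σ_{i=l+2}^{n} ℤαᵢ, a sublattice of index 2 in Q. -/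
open Finset

-- char 2 symmetric double sum reduces to diagonal
lemma sum_sym_char2 {n : ℕ} (q : Fin n → Fin n → ZMod 2) (ht : ∀ i j, q i j = q j i) :
    ∑ i, ∑ j, q i j = ∑ i, q i i := by
  classical
  rw [← Finset.sum_product']
  have hsplit : ∀ p : Fin n × Fin n, q p.1 p.2 =
      (if p.1 = p.2 then q p.1 p.2 else 0) + (if p.1 = p.2 then 0 else q p.1 p.2) := by
    intro p; split <;> simp
  calc ∑ p ∈ Finset.univ ×ˢ Finset.univ, q p.1 p.2
      = ∑ p ∈ Finset.univ ×ˢ Finset.univ, ((if p.1 = p.2 then q p.1 p.2 else 0)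
          + (if p.1 = p.2 then 0 else q p.1 p.2)) := Finset.sum_congr rfl (fun p _ => hsplit p)
    _ = ∑ p ∈ Finset.univ ×ˢ Finset.univ, (if p.1 = p.2 then q p.1 p.2 else 0)
          + ∑ p ∈ Finset.univ ×ˢ Finset.univ, (if p.1 = p.2 then 0 else q p.1 p.2) :=
        Finset.sum_add_distrib
    _ = ∑ i, q i i := by
        have h2 : ∑ p ∈ Finset.univ ×ˢ Finset.univ,
            (if p.1 = p.2 then 0 else q p.1 p.2) = 0 := by
          refine Finset.sum_ninvolution (fun p => (p.2, p.1)) ?_ ?_ ?_ ?_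
          · intro a
            rcases eq_or_ne a.1 a.2 with h | h
            · simp [h]
            · simp only [if_neg h, if_neg (Ne.symm h)]
              rw [ht a.1 a.2]
              exact (CharTwo.add_self_eq_zero _)
          · intro a ha
            intro hc
            apply ha
            have h1 := congrArg Prod.fst hc
            simp only at h1
            simp [h1]
          · intro a; simp
          · intro a; rfl
        rw [h2, add_zero]
        have h3 : ∑ p ∈ Finset.univ ×ˢ Finset.univ,
            (if p.1 = p.2 then q p.1 p.2 else 0)
            = ∑ i, ∑ j, (if i = j then q i j else 0) :=
          Finset.sum_product' (s := Finset.univ) (t := Finset.univ) (f := fun i j => if i = j then q i j else 0)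
        rw [h3]
        refine Finset.sum_congr rfl (fun i _ => ?_)
        simp

lemma key (n l : ℕ) (hl : 1 ≤ l) (hn : n = 2 * l) (γ : Fin n → ℤ) :
    ((∑ i, ∑ j, γ i * γ j.rev *
      (if i = j then 2 else if (i : ℕ) + 1 = (j : ℕ) ∨ (j : ℕ) + 1 = (i : ℕ) then -1 else 0) : ℤ)
      : ZMod 2)
    = ((γ ⟨l - 1, (by omega : n > l - 1)⟩ + γ ⟨l, (by omega : n > l)⟩ : ℤ) : ZMod 2) := by
  have hn0 : 0 < n := by omega
  push_cast
  set c : Fin n → Fin n → ZMod 2 := fun i j =>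
    if i = j then 2 else if (i : ℕ) + 1 = (j : ℕ) ∨ (j : ℕ) + 1 = (i : ℕ) then -1 else 0 with hc
  -- after push_cast the matrix entries become `c i j`
  have step1 : ∀ i : Fin n, (∑ j, (γ i : ZMod 2) * (γ j.rev : ZMod 2) * c i j)
      = ∑ j, (γ i : ZMod 2) * (γ j : ZMod 2) * c i j.rev := by
    intro i
    refine Fintype.sum_equiv (Fin.revPerm) _ _ (fun j => ?_)
    simp [Fin.rev_rev]
  rw [Finset.sum_congr rfl (fun i _ => step1 i)]
  have hsym : ∀ i j : Fin n, (γ i : ZMod 2) * (γ j : ZMod 2) * c i j.rev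
      = (γ j : ZMod 2) * (γ i : ZMod 2) * c j i.rev := by
    intro i j
    have hi := i.isLt; have hj := j.isLt
    have h1 : (i = j.rev) ↔ (j = i.rev) := by
      rw [Fin.ext_iff, Fin.ext_iff, Fin.val_rev, Fin.val_rev]; omega
    have h2 : ((i:ℕ) + 1 = (j.rev:ℕ) ∨ (j.rev:ℕ) + 1 = (i:ℕ)) ↔
        ((j:ℕ) + 1 = (i.rev:ℕ) ∨ (i.rev:ℕ) + 1 = (j:ℕ)) := by
      rw [Fin.val_rev, Fin.val_rev]; omega
    have hcc : c i j.rev = c j i.rev := by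
      simp only [hc]
      exact if_congr h1 rfl (if_congr h2 rfl rfl)
    rw [hcc]; ring
  rw [sum_sym_char2 (fun i j => (γ i : ZMod 2) * (γ j : ZMod 2) * c i j.rev) hsym]
  have hdiag : ∀ i : Fin n, c i i.rev = if (i:ℕ) = l - 1 ∨ (i:ℕ) = l then 1 else 0 := by
    intro i
    have hi := i.isLt
    simp only [hc]
    have h1 : ¬(i = i.rev) := by rw [Fin.ext_iff, Fin.val_rev]; omega
    have h2 : ((i:ℕ) + 1 = (i.rev:ℕ) ∨ (i.rev:ℕ) + 1 = (i:ℕ)) ↔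
        ((i:ℕ) = l - 1 ∨ (i:ℕ) = l) := by
      rw [Fin.val_rev]; omega
    rw [if_neg h1, if_congr h2 rfl rfl]
    split <;> decide
  have hxx : ∀ x : ZMod 2, x * x = x := by decide
  have hmemiff : ∀ i : Fin n, i ∈ ({⟨l - 1, by omega⟩, ⟨l, by omega⟩} : Finset (Fin n))
      ↔ ((i:ℕ) = l - 1 ∨ (i:ℕ) = l) := by
    intro i; simp [Fin.ext_iff]
  calc ∑ i, (γ i : ZMod 2) * (γ i : ZMod 2) * c i i.rev
      = ∑ i, (if i ∈ ({⟨l - 1, by omega⟩, ⟨l, by omega⟩} : Finset (Fin n))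
          then (γ i : ZMod 2) else 0) := by
        refine Finset.sum_congr rfl fun i _ => ?_
        rw [hdiag i]
        by_cases h : (i:ℕ) = l - 1 ∨ (i:ℕ) = l
        · rw [if_pos h, if_pos ((hmemiff i).mpr h), mul_one, hxx]
        · rw [if_neg h, if_neg (fun hm => h ((hmemiff i).mp hm)), mul_zero]
    _ = ∑ i ∈ ({⟨l - 1, by omega⟩, ⟨l, by omega⟩} : Finset (Fin n)), (γ i : ZMod 2) := by
        rw [Finset.sum_ite_mem, Finset.univ_inter]
    _ = (γ ⟨l - 1, by omega⟩ : ZMod 2) + (γ ⟨l, by omega⟩ : ZMod 2) := by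
        rw [Finset.sum_pair (by rw [Fin.ne_iff_vne]; simp; omega)]

section Main

/-- the linear form `γ ↦ γ il + γ il1 mod 2` -/
def phi (n l : ℕ) (h1 : l - 1 < n) (h2 : l < n) : (Fin n → ℤ) →+ ZMod 2 where
  toFun γ := ((γ ⟨l - 1, h1⟩ + γ ⟨l, h2⟩ : ℤ) : ZMod 2)
  map_zero' := by simp
  map_add' x y := by push_cast [Pi.add_apply]; ring

def Qb (n l : ℕ) (h1 : l - 1 < n) (h2 : l < n) : AddSubgroup (Fin n → ℤ) :=
  AddSubgroup.closure
    ({v : Fin n → ℤ | ∃ i : Fin n, i ≠ ⟨l - 1, h1⟩ ∧ i ≠ ⟨l, h2⟩ ∧ v = Pi.single i 1} ∪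
      {Pi.single (⟨l - 1, h1⟩ : Fin n) (1:ℤ) + Pi.single (⟨l, h2⟩ : Fin n) (1:ℤ),
       Pi.single (⟨l - 1, h1⟩ : Fin n) (1:ℤ) - Pi.single (⟨l, h2⟩ : Fin n) (1:ℤ)})


def sg {n : ℕ} (i : Fin n) (c : ℤ) : Fin n → ℤ := Pi.single i c

lemma sg_apply_same {n : ℕ} (i : Fin n) (c : ℤ) : sg i c i = c := by simp [sg]

lemma sg_apply_ne {n : ℕ} {i j : Fin n} (h : j ≠ i) (c : ℤ) : sg i c j = 0 := by
  simp [sg, Pi.single_eq_of_ne h]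

lemma sg_smul {n : ℕ} (i : Fin n) (c : ℤ) : sg i c = c • sg i 1 := by
  unfold sg
  rw [← Pi.single_smul]; simp

theorem main (n l : ℕ) (hl : 1 ≤ l) (hn : n = 2 * l)
    (h1 : l - 1 < n) (h2 : l < n) :
    (∀ γ : Fin n → ℤ, 2 ∣ (∑ i, ∑ j, γ i * γ j.rev *
        (if i = j then 2 else if (i : ℕ) + 1 = (j : ℕ) ∨ (j : ℕ) + 1 = (i : ℕ) then -1 else 0))
      ↔ 2 ∣ (γ ⟨l - 1, h1⟩ + γ ⟨l, h2⟩)) ∧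
    (∀ γ : Fin n → ℤ, γ ∈ Qb n l h1 h2
      ↔ 2 ∣ (∑ i, ∑ j, γ i * γ j.rev *
        (if i = j then 2 else if (i : ℕ) + 1 = (j : ℕ) ∨ (j : ℕ) + 1 = (i : ℕ) then -1 else 0))) ∧
    Nat.card ((Fin n → ℤ) ⧸ Qb n l h1 h2) = 2 := by
  have hne : (⟨l - 1, h1⟩ : Fin n) ≠ ⟨l, h2⟩ := by
    rw [Fin.ne_iff_vne]; simp; omega
  have hdvd2 : ∀ a : ℤ, 2 ∣ a ↔ ((a : ZMod 2) = 0) := by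
    intro a; rw [ZMod.intCast_zmod_eq_zero_iff_dvd]; norm_num
  -- Part 1
  have part1 : ∀ γ : Fin n → ℤ, 2 ∣ (∑ i, ∑ j, γ i * γ j.rev *
        (if i = j then 2 else if (i : ℕ) + 1 = (j : ℕ) ∨ (j : ℕ) + 1 = (i : ℕ) then -1 else 0))
      ↔ 2 ∣ (γ (⟨l - 1, h1⟩ : Fin n) + γ (⟨l, h2⟩ : Fin n)) := by
    intro γ
    rw [hdvd2, hdvd2]
    constructor
    · intro h; rw [← key n l hl hn γ]; exact h
    · intro h; rw [key n l hl hn γ]; exact h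
  -- Part 2
  have part2' : ∀ γ : Fin n → ℤ, γ ∈ Qb n l h1 h2 ↔ 2 ∣ (γ (⟨l - 1, h1⟩ : Fin n) + γ (⟨l, h2⟩ : Fin n)) := by
    intro γ
    constructor
    · intro hγ
      have hker : Qb n l h1 h2 ≤ (phi n l h1 h2).ker := by
        unfold Qb
        rw [AddSubgroup.closure_le]
        rintro v (⟨i, hi, hi1, rfl⟩ | hv)
        · have e1 : (Pi.single i 1 : Fin n → ℤ) ⟨l - 1, h1⟩ = 0 := Pi.single_eq_of_ne (Ne.symm hi) 1
          have e2 : (Pi.single i 1 : Fin n → ℤ) ⟨l, h2⟩ = 0 := Pi.single_eq_of_ne (Ne.symm hi1) 1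
          simp only [SetLike.mem_coe, AddMonoidHom.mem_ker, phi, AddMonoidHom.coe_mk,
            ZeroHom.coe_mk]
          rw [e1, e2]
          norm_num
        · simp only [Set.mem_insert_iff, Set.mem_singleton_iff] at hv
          rcases hv with rfl | rfl <;>
          · simp only [SetLike.mem_coe, AddMonoidHom.mem_ker, phi, AddMonoidHom.coe_mk,
              ZeroHom.coe_mk, Pi.add_apply, Pi.sub_apply]
            rw [Pi.single_eq_same, Pi.single_eq_same,
              Pi.single_eq_of_ne (Ne.symm hne), Pi.single_eq_of_ne hne]
            decide
      have := hker hγ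
      rw [AddMonoidHom.mem_ker] at this
      rw [hdvd2]
      exact this
    · intro hdvd
      obtain ⟨m, hm⟩ := hdvd
      have hu : sg (⟨l - 1, h1⟩ : Fin n) 1 + sg (⟨l, h2⟩ : Fin n) 1 ∈ Qb n l h1 h2 :=
        AddSubgroup.subset_closure (Or.inr (by simp [sg]))
      have hv : sg (⟨l - 1, h1⟩ : Fin n) 1 - sg (⟨l, h2⟩ : Fin n) 1 ∈ Qb n l h1 h2 :=
        AddSubgroup.subset_closure (Or.inr (by simp [sg]))
      have hmain : sg (⟨l - 1, h1⟩ : Fin n) (γ (⟨l - 1, h1⟩ : Fin n)) + sg (⟨l, h2⟩ : Fin n) (γ (⟨l, h2⟩ : Fin n)) ∈ Qb n l h1 h2 := by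
        have hx : sg (⟨l - 1, h1⟩ : Fin n) (γ (⟨l - 1, h1⟩ : Fin n)) + sg (⟨l, h2⟩ : Fin n) (γ (⟨l, h2⟩ : Fin n))
            = m • (sg (⟨l - 1, h1⟩ : Fin n) 1 + sg (⟨l, h2⟩ : Fin n) 1)
              + (m - γ (⟨l, h2⟩ : Fin n)) • (sg (⟨l - 1, h1⟩ : Fin n) 1 - sg (⟨l, h2⟩ : Fin n) 1) := by
          rw [sg_smul (⟨l - 1, h1⟩ : Fin n) (γ (⟨l - 1, h1⟩ : Fin n)), sg_smul (⟨l, h2⟩ : Fin n) (γ (⟨l, h2⟩ : Fin n))]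
          have hγil : γ (⟨l - 1, h1⟩ : Fin n) = 2 * m - γ (⟨l, h2⟩ : Fin n) := by omega
          rw [hγil]
          module
        rw [hx]
        exact add_mem (zsmul_mem hu m) (zsmul_mem hv (m - γ (⟨l, h2⟩ : Fin n)))
      have hzero : ∀ w : Fin n → ℤ, w (⟨l - 1, h1⟩ : Fin n) = 0 → w (⟨l, h2⟩ : Fin n) = 0 → w ∈ Qb n l h1 h2 := by
        intro w hw1 hw2
        rw [← Finset.univ_sum_single w]
        refine AddSubgroup.sum_mem _ (fun i _ => ?_)
        by_cases hi : i = (⟨l - 1, h1⟩ : Fin n)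
        · subst hi; rw [hw1, Pi.single_zero]; exact zero_mem _
        by_cases hi1 : i = (⟨l, h2⟩ : Fin n)
        · subst hi1; rw [hw2, Pi.single_zero]; exact zero_mem _
        · have hgen : sg i 1 ∈ Qb n l h1 h2 := by
            unfold Qb
            exact AddSubgroup.subset_closure (Or.inl ⟨i, hi, hi1, rfl⟩)
          have hmem : sg i (w i) ∈ Qb n l h1 h2 := by
            rw [sg_smul]
            exact zsmul_mem hgen _
          exact hmem
      have hδ : γ - (sg (⟨l - 1, h1⟩ : Fin n) (γ (⟨l - 1, h1⟩ : Fin n)) + sg (⟨l, h2⟩ : Fin n) (γ (⟨l, h2⟩ : Fin n))) ∈ Qb n l h1 h2 := by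
        refine hzero _ ?_ ?_
        · simp [sg_apply_same, sg_apply_ne hne, sg_apply_ne (Ne.symm hne)]
        · simp [sg_apply_same, sg_apply_ne hne, sg_apply_ne (Ne.symm hne)]
      have := add_mem hδ hmain
      simpa using this
  refine ⟨part1, fun γ => (part2' γ).trans (part1 γ).symm, ?_⟩
  -- Part 3
  have hkereq : Qb n l h1 h2 = (phi n l h1 h2).ker := by
    ext γ
    rw [part2' γ, AddMonoidHom.mem_ker, hdvd2]
    rfl
  have hsurj : Function.Surjective (phi n l h1 h2) := by
    intro z
    have hz : ∀ w : ZMod 2, w = 0 ∨ w = 1 := by decide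
    rcases hz z with rfl | rfl
    · exact ⟨0, map_zero _⟩
    · refine ⟨sg (⟨l - 1, h1⟩ : Fin n) 1, ?_⟩
      simp only [phi, AddMonoidHom.coe_mk, ZeroHom.coe_mk]
      rw [sg_apply_same, sg_apply_ne (Ne.symm hne)]
      norm_num
  rw [hkereq]
  rw [Nat.card_congr (QuotientAddGroup.quotientKerEquivOfSurjective _ hsurj).toEquiv]
  simp [Nat.card_eq_fintype_card]

end Main

/-- For `n = 2l` even and the diagram automorphism `σ` of the `Aₙ` root lattice
(on `ℤⁿ` with the Cartan form, 0-based coordinates): `(γ|σγ) ∈ 2ℤ` iff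
`c_l + c_{l+1} ∈ 2ℤ` (1-based; 0-based indices `l-1` and `l`), the sublattice
`Q̄ = {γ : (γ|σγ) ∈ 2ℤ}` is generated by the `αᵢ` for `i ∉ {l, l+1}` together
with `α_l + α_{l+1}` and `α_l - α_{l+1}`, and it has index 2 in `Q`. -/
theorem stmt_16 (n l : ℕ) (hl : 1 ≤ l) (hn : n = 2 * l) :
    let C : Fin n → Fin n → ℤ := fun i j =>
      if i = j then 2 else if (i : ℕ) + 1 = (j : ℕ) ∨ (j : ℕ) + 1 = (i : ℕ) then -1 else 0
    let B : (Fin n → ℤ) → (Fin n → ℤ) → ℤ := fun x y => ∑ i, ∑ j, x i * y j * C i j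
    let σ : (Fin n → ℤ) → (Fin n → ℤ) := fun x i => x i.rev
    let il : Fin n := ⟨l - 1, by omega⟩
    let il1 : Fin n := ⟨l, by omega⟩
    let Qbar : AddSubgroup (Fin n → ℤ) := AddSubgroup.closure
      ({v : Fin n → ℤ | ∃ i : Fin n, i ≠ il ∧ i ≠ il1 ∧ v = Pi.single i 1} ∪
        {Pi.single il 1 + Pi.single il1 1, Pi.single il 1 - Pi.single il1 1})
    (∀ γ : Fin n → ℤ, 2 ∣ B γ (σ γ) ↔ 2 ∣ (γ il + γ il1)) ∧
    (∀ γ : Fin n → ℤ, γ ∈ Qbar ↔ 2 ∣ B γ (σ γ)) ∧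
    Nat.card ((Fin n → ℤ) ⧸ Qbar) = 2 := by
  intro C B σ il il1 Qbar
  exact main n l hl hn (by omega) (by omega)
end
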